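/- arXiv:0706.1226 — 2 statements merged into one kernel-verified Lean document; each statement's English description precedes it below -/
import Mathlib

section
/- Suppose c satisfies (A0), (A1), (A2), and let x_m ∈ Ω and y₀, y₁ ∈ Λ be joined by a c-segment [y₀,y₁]_{x_m} lying in Λ. If Strict Monotonicity holds (S⁺_{θ₁} ⊆ S⁺_{θ₂} whenever 0 ≤ θ₁ ≤ θ₂ ≤ 1, and S_{θ₁} ∩ S_{θ₂} = {x_m} whenever 0 ≤ θ₁ < θ₂ ≤ 1), then Strict DASM holds: f_θ(x) ≤ max(f₀(x), f₁(x)) for all θ ∈ (0,1) and all x ∈ Ω, with strict inequality whenever x ≠ x_m. -/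
open scoped RealInnerProductSpace
open Filter Topology Set

noncomputable section

variable {n : ℕ}

local notation "E" => EuclideanSpace ℝ (Fin n)

/-- `-∇ₓ c(x,y)`, the negative gradient of `x' ↦ c(x',y)` at `x`. -/
def negGradX (c : E → E → ℝ) (x y : E) : E :=
  -(gradient (fun x' => c x' y) x)

/-- `-∇_y c(x,y)`, the negative gradient of `y' ↦ c(x,y')` at `y`. -/
def negGradY (c : E → E → ℝ) (x y : E) : E :=
  -(gradient (fun y' => c x y') y)

/-- The swapped cost `c*(y,x) = c(x,y)`. -/
def cStar (c : E → E → ℝ) : E → E → ℝ := fun y x => c x y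

/-- The domain of the `c`-exponential map at `x`: `{-∇ₓ c(x,y) : y ∈ Λ}`. -/
def cExpDom (c : E → E → ℝ) (Λ : Set E) (x : E) : Set E :=
  (fun y => negGradX c x y) '' Λ

/-- The `c`-exponential map: `cExp c Λ x p` is the point `y ∈ Λ` with `p = -∇ₓ c(x,y)`
(when it exists and is unique). -/
def cExp (c : E → E → ℝ) (Λ : Set E) (x p : E) : E :=
  Function.invFunOn (fun y => negGradX c x y) Λ p

/-- Condition (A0): the cost extends to a `C⁴` function on `cl Ω × cl Λ`. -/
def A0 (c : E → E → ℝ) (Ω Λ : Set E) : Prop :=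
  ContDiffOn ℝ 4 (fun q : E × E => c q.1 q.2) (closure Ω ×ˢ closure Λ)

/-- Condition (A1): injectivity of `y ↦ -∇ₓ c(x,y)` on `cl Λ` and of
`x ↦ -∇_y c(x,y)` on `cl Ω`. -/
def A1 (c : E → E → ℝ) (Ω Λ : Set E) : Prop :=
  (∀ x ∈ Ω, Set.InjOn (fun y => negGradX c x y) (closure Λ)) ∧
  (∀ y ∈ Λ, Set.InjOn (fun x => negGradY c x y) (closure Ω))

/-- Condition (A2): the mixed second derivative `D²ₓᵧ c(x,y)`, as a linear map, is
invertible for all `(x,y) ∈ cl Ω × cl Λ`. -/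
def A2 (c : E → E → ℝ) (Ω Λ : Set E) : Prop :=
  ∀ x ∈ closure Ω, ∀ y ∈ closure Λ,
    Function.Bijective (fderiv ℝ (fun y' => negGradX c x y') y)

/-- The `c`-sectional curvature
`𝔖_c(x,y)(η,ξ) = (d²/dt²)|₀ [-D²ₓₓ c](x, cExpₓ(p + tξ))(η,η)` with `p = -∇ₓ c(x,y)`. -/
def cSectional (c : E → E → ℝ) (Λ : Set E) (x y η ξ : E) : ℝ :=
  deriv (deriv (fun t : ℝ =>
    -(iteratedFDeriv ℝ 2
        (fun x' => c x' (cExp c Λ x (negGradX c x y + t • ξ))) x ![η, η]))) 0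

/-- Condition (A3W): nonnegative `c`-sectional curvature in orthogonal directions. -/
def A3W (c : E → E → ℝ) (Ω Λ : Set E) : Prop :=
  ∀ x ∈ Ω, ∀ y ∈ Λ, ∀ η ξ : E, ⟪η, ξ⟫ = 0 → 0 ≤ cSectional c Λ x y η ξ

/-- Condition (A3S): uniformly positive `c`-sectional curvature in orthogonal directions. -/
def A3S (c : E → E → ℝ) (Ω Λ : Set E) : Prop :=
  ∃ C₀ > (0:ℝ), ∀ x ∈ Ω, ∀ y ∈ Λ, ∀ η ξ : E, ⟪η, ξ⟫ = 0 →
    C₀ * ‖η‖ ^ 2 * ‖ξ‖ ^ 2 ≤ cSectional c Λ x y η ξ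

/-- `Λ` is `c`-convex with respect to `Ω`: `(cExpₓ)⁻¹(Λ)` is convex for every `x ∈ Ω`. -/
def CConvexTarget (c : E → E → ℝ) (Ω Λ : Set E) : Prop :=
  ∀ x ∈ Ω, Convex ℝ (cExpDom c Λ x)

/-- `Ω` is `c*`-convex with respect to `Λ`: `(c*Exp_y)⁻¹(Ω)` is convex for every `y ∈ Λ`. -/
def CStarConvexSource (c : E → E → ℝ) (Ω Λ : Set E) : Prop :=
  ∀ y ∈ Λ, Convex ℝ ((fun x => negGradY c x y) '' Ω)

/-- The `c`-Legendre transform `L^c v(x) = sup_{y ∈ Λ} (-c(x,y) - v(y))`. -/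
def cTransform (c : E → E → ℝ) (Λ : Set E) (v : E → EReal) (x : E) : EReal :=
  ⨆ y ∈ Λ, (((-(c x y) : ℝ) : EReal) - v y)

/-- `φ` is a `c`-convex function on `Ω` indexed by `Λ`. -/
def IsCConvexOn (c : E → E → ℝ) (Ω Λ : Set E) (φ : E → ℝ) : Prop :=
  ∃ v : E → EReal,
    (∀ x ∈ Ω, (φ x : EReal) = cTransform c Λ v x) ∧
    (∀ x ∈ Ω, ∃ y ∈ closure Λ, (φ x : EReal) + v y = ((-(c x y) : ℝ) : EReal))

/-- The `c*`-Legendre transform `L^{c*} φ(y) = sup_{x ∈ Ω} (-c(x,y) - φ(x))`. -/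
def cStarTransform (c : E → E → ℝ) (Ω : Set E) (φ : E → ℝ) (y : E) : EReal :=
  ⨆ x ∈ Ω, (((-(c x y) - φ x : ℝ)) : EReal)

/-- The contact set `G_φ(x) = {y ∈ cl Λ : φ(x) + L^{c*}φ(y) = -c(x,y)}`. -/
def contactSet (c : E → E → ℝ) (Ω Λ : Set E) (φ : E → ℝ) (x : E) : Set E :=
  {y ∈ closure Λ | (φ x : EReal) + cStarTransform c Ω φ y = ((-(c x y) : ℝ) : EReal)}

/-- The (local) subdifferential `∂φ(x)`:
`φ(z) ≥ φ(x) + ⟨p, z - x⟩ + o(‖z - x‖)` as `z → x` in `Ω`. -/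
def subdiff (Ω : Set E) (φ : E → ℝ) (x : E) : Set E :=
  {p : E | ∀ ε > (0:ℝ), ∀ᶠ z in 𝓝[Ω] x,
      φ x + ⟪p, z - x⟫ - ε * ‖z - x‖ ≤ φ z}

/-- The `c`-subdifferential `∂^c φ(x) = {-∇ₓ c(x,y) : y ∈ G_φ(x)}`. -/
def cSubdiff (c : E → E → ℝ) (Ω Λ : Set E) (φ : E → ℝ) (x : E) : Set E :=
  (fun y => negGradX c x y) '' contactSet c Ω Λ φ x

/-- The straight segment `p_θ = (1-θ) p₀ + θ p₁` with `pᵢ = -∇ₓ c(x_m, yᵢ)`. -/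
def pSeg (c : E → E → ℝ) (xm y₀ y₁ : E) (θ : ℝ) : E :=
  (1 - θ) • negGradX c xm y₀ + θ • negGradX c xm y₁

/-- The `c`-segment `y_θ = cExp_{x_m}(p_θ)` joining `y₀` to `y₁` with respect to `x_m`. -/
def ySeg (c : E → E → ℝ) (Λ : Set E) (xm y₀ y₁ : E) (θ : ℝ) : E :=
  cExp c Λ xm (pSeg c xm y₀ y₁ θ)

/-- The sliding mountain `f_θ(x) = -c(x, y_θ) + c(x_m, y_θ)`. -/
def slide (c : E → E → ℝ) (Λ : Set E) (xm y₀ y₁ : E) (θ : ℝ) (x : E) : ℝ :=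
  -(c x (ySeg c Λ xm y₀ y₁ θ)) + c xm (ySeg c Λ xm y₀ y₁ θ)

/-- The `c`-segment `[y₀,y₁]_{x_m}` lies in `Λ`:
each `p_θ`, `θ ∈ [0,1]`, is in the domain of `cExp_{x_m}`. -/
def segInTarget (c : E → E → ℝ) (Λ : Set E) (xm y₀ y₁ : E) : Prop :=
  ∀ θ ∈ Set.Icc (0:ℝ) 1, pSeg c xm y₀ y₁ θ ∈ cExpDom c Λ xm

/-- The level set `S_θ = {x ∈ Ω : (d/dθ) f_θ(x) = 0}`. -/
def Slevel (c : E → E → ℝ) (Ω Λ : Set E) (xm y₀ y₁ : E) (θ : ℝ) : Set E :=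
  {x ∈ Ω | deriv (fun θ' => slide c Λ xm y₀ y₁ θ' x) θ = 0}

/-- The super-level set `S⁺_θ = {x ∈ Ω : (d/dθ) f_θ(x) ≥ 0}`. -/
def Splus (c : E → E → ℝ) (Ω Λ : Set E) (xm y₀ y₁ : E) (θ : ℝ) : Set E :=
  {x ∈ Ω | 0 ≤ deriv (fun θ' => slide c Λ xm y₀ y₁ θ' x) θ}

section Aux

lemma contDiffOn_open {c : E → E → ℝ} {Ω Λ : Set E} (h0 : A0 c Ω Λ) :
    ContDiffOn ℝ 4 (fun q : E × E => c q.1 q.2) (Ω ×ˢ Λ) :=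
  h0.mono (Set.prod_mono subset_closure subset_closure)

lemma contDiffAt_c {c : E → E → ℝ} {Ω Λ : Set E} (hΩ : IsOpen Ω) (hΛ : IsOpen Λ) (h0 : A0 c Ω Λ)
    {x y : E} (hx : x ∈ Ω) (hy : y ∈ Λ) :
    ContDiffAt ℝ 4 (fun q : E × E => c q.1 q.2) (x, y) :=
  (contDiffOn_open h0).contDiffAt ((hΩ.prod hΛ).mem_nhds ⟨hx, hy⟩)

lemma negGradX_repr {c : E → E → ℝ} {Ω Λ : Set E} (hΩ : IsOpen Ω) (hΛ : IsOpen Λ) (h0 : A0 c Ω Λ)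
    {x y : E} (hx : x ∈ Ω) (hy : y ∈ Λ) :
    negGradX c x y = -((InnerProductSpace.toDual ℝ E).symm
      ((fderiv ℝ (fun q : E × E => c q.1 q.2) (x, y)).comp
        (ContinuousLinearMap.inl ℝ E E))) := by
  have hd : DifferentiableAt ℝ (fun q : E × E => c q.1 q.2) (x, y) :=
    (contDiffAt_c hΩ hΛ h0 hx hy).differentiableAt (by norm_num)
  have h1 : HasFDerivAt (fun x' => c x' y)
      ((fderiv ℝ (fun q : E × E => c q.1 q.2) (x, y)).comp
        (ContinuousLinearMap.inl ℝ E E)) x :=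
    hd.hasFDerivAt.comp (g := fun q : E × E => c q.1 q.2) x (hasFDerivAt_prodMk_left (𝕜 := ℝ) x y)
  unfold negGradX gradient
  rw [h1.fderiv]

lemma contDiffAt_negGradX {c : E → E → ℝ} {Ω Λ : Set E} (hΩ : IsOpen Ω) (hΛ : IsOpen Λ) (h0 : A0 c Ω Λ)
    {x y : E} (hx : x ∈ Ω) (hy : y ∈ Λ) :
    ContDiffAt ℝ 1 (fun y' => negGradX c x y') y := by
  have hDf : ContDiffAt ℝ 1 (fderiv ℝ (fun q : E × E => c q.1 q.2)) (x, y) :=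
    (contDiffAt_c hΩ hΛ h0 hx hy).fderiv_right (by norm_num)
  have h1 : ContDiffAt ℝ 1 (fun y' : E => fderiv ℝ (fun q : E × E => c q.1 q.2) (x, y')) y :=
    hDf.comp y (contDiffAt_const.prodMk contDiffAt_id)
  have h2 : ContDiffAt ℝ 1
      (fun y' : E => (fderiv ℝ (fun q : E × E => c q.1 q.2) (x, y')).comp
        (ContinuousLinearMap.inl ℝ E E)) y :=
    h1.clm_comp contDiffAt_const
  have h3 : ContDiffAt ℝ 1
      (fun y' : E => -((InnerProductSpace.toDual ℝ E).symm
        ((fderiv ℝ (fun q : E × E => c q.1 q.2) (x, y')).comp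
          (ContinuousLinearMap.inl ℝ E E)))) y :=
    (((InnerProductSpace.toDual ℝ E).symm.contDiff.contDiffAt).comp y h2).neg
  refine h3.congr_of_eventuallyEq ?_
  filter_upwards [hΛ.mem_nhds hy] with y' hy'
  exact negGradX_repr hΩ hΛ h0 hx hy'

lemma cExp_spec {c : E → E → ℝ} {Λ : Set E} {x p : E} (hp : p ∈ cExpDom c Λ x) :
    cExp c Λ x p ∈ Λ ∧ negGradX c x (cExp c Λ x p) = p := by
  obtain ⟨y, hy, hyp⟩ := hp
  exact ⟨Function.invFunOn_mem ⟨y, hy, hyp⟩, Function.invFunOn_eq ⟨y, hy, hyp⟩⟩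

/-- Key continuity lemma: the c-exponential map is continuous on its domain. -/
lemma cExp_continuousWithinAt {c : E → E → ℝ} {Ω Λ : Set E} (hΩ : IsOpen Ω) (hΛ : IsOpen Λ)
    (h0 : A0 c Ω Λ) (h1 : A1 c Ω Λ) (h2 : A2 c Ω Λ)
    {x p : E} (hx : x ∈ Ω) (hp : p ∈ cExpDom c Λ x) :
    ContinuousWithinAt (cExp c Λ x) (cExpDom c Λ x) p := by
  classical
  set F : E → E := fun y' => negGradX c x y' with hF
  obtain ⟨hyΛ, hyp⟩ := cExp_spec (c := c) (Λ := Λ) (x := x) hp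
  set y : E := cExp c Λ x p with hy
  -- the derivative of F at y is bijective
  have hbij : Function.Bijective (fderiv ℝ F y) :=
    h2 x (subset_closure hx) y (subset_closure hyΛ)
  set f' : E ≃L[ℝ] E :=
    ((LinearEquiv.ofBijective ((fderiv ℝ F y) : E →ₗ[ℝ] E) hbij).toContinuousLinearEquiv) with hf'
  have hcd : ContDiffAt ℝ 1 F y := contDiffAt_negGradX hΩ hΛ h0 hx hyΛ
  have hf'e : (f' : E →L[ℝ] E) = fderiv ℝ F y := by ext v; rfl
  have hsf : HasStrictFDerivAt F (f' : E →L[ℝ] E) y := by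
    rw [hf'e]; exact hcd.hasStrictFDerivAt (by norm_num)
  have hypF : F y = p := hyp
  set Φ := hsf.toOpenPartialHomeomorph F with hΦ
  have hyc : y ∈ Φ.source := hsf.mem_toOpenPartialHomeomorph_source
  have hΦF : ∀ z, Φ z = F z := fun z => by
    rw [hΦ, hsf.toOpenPartialHomeomorph_coe]
  -- the open neighbourhood of p on which cExp agrees with Φ.symm
  set U : Set E := Φ.source ∩ Λ with hU
  set V : Set E := Φ.target ∩ Φ.symm ⁻¹' U with hV
  have hUopen : IsOpen U := Φ.open_source.inter hΛ
  have hVopen : IsOpen V := Φ.isOpen_inter_preimage_symm hUopen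
  have hpV : p ∈ V := by
    have hpt : p ∈ Φ.target := by
      have := Φ.map_source hyc
      rwa [hΦF, hypF] at this
    refine ⟨hpt, ?_⟩
    have : Φ.symm p = y := by
      have := Φ.left_inv hyc
      rwa [hΦF, hypF] at this
    rw [Set.mem_preimage, this]
    exact ⟨hyc, hyΛ⟩
  -- on V ∩ cExpDom, cExp coincides with Φ.symm
  have hagree : ∀ q ∈ cExpDom c Λ x ∩ V, cExp c Λ x q = Φ.symm q := by
    rintro q ⟨hq, hqt, hqU⟩
    obtain ⟨hql, hqe⟩ := cExp_spec (c := c) (Λ := Λ) (x := x) hq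
    have h1' : F (Φ.symm q) = q := by
      rw [← hΦF]; exact Φ.right_inv hqt
    have h2' : Φ.symm q ∈ Λ := hqU.2
    exact (h1.1 x hx) (subset_closure hql) (subset_closure h2') (hqe.trans h1'.symm)
  have hsymc : ContinuousAt Φ.symm p := Φ.continuousAt_symm hpV.1
  have : ContinuousWithinAt (cExp c Λ x) (cExpDom c Λ x ∩ V) p := by
    refine (hsymc.continuousWithinAt).congr hagree ?_
    have : Φ.symm p = y := by
      have := Φ.left_inv hyc
      rwa [hΦF, hypF] at this
    rw [this]
  rwa [continuousWithinAt_inter (hVopen.mem_nhds hpV)] at this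

end Aux

lemma continuousOn_ySeg {c : E → E → ℝ} {Ω Λ : Set E} (hΩ : IsOpen Ω) (hΛ : IsOpen Λ)
    (h0 : A0 c Ω Λ) (h1 : A1 c Ω Λ) (h2 : A2 c Ω Λ)
    {xm : E} (hxm : xm ∈ Ω) {y₀ y₁ : E} (hseg : segInTarget c Λ xm y₀ y₁) :
    ContinuousOn (fun θ => ySeg c Λ xm y₀ y₁ θ) (Set.Icc (0:ℝ) 1) := by
  intro θ hθ
  have hps : Continuous (pSeg c xm y₀ y₁) := by
    unfold pSeg
    fun_prop
  exact (cExp_continuousWithinAt hΩ hΛ h0 h1 h2 hxm (hseg θ hθ)).comp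
    hps.continuousWithinAt (fun t ht => hseg t ht)

lemma continuousOn_slide {c : E → E → ℝ} {Ω Λ : Set E} (hΩ : IsOpen Ω) (hΛ : IsOpen Λ)
    (h0 : A0 c Ω Λ) (h1 : A1 c Ω Λ) (h2 : A2 c Ω Λ)
    {xm : E} (hxm : xm ∈ Ω) {y₀ y₁ : E} (hseg : segInTarget c Λ xm y₀ y₁)
    {x : E} (hx : x ∈ Ω) :
    ContinuousOn (fun θ => slide c Λ xm y₀ y₁ θ x) (Set.Icc (0:ℝ) 1) := by
  have key : ∀ x' ∈ Ω, ContinuousOn (fun θ => c x' (ySeg c Λ xm y₀ y₁ θ)) (Set.Icc (0:ℝ) 1) := by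
    intro x' hx' θ hθ
    have hyΛ : ySeg c Λ xm y₀ y₁ θ ∈ Λ := (cExp_spec (hseg θ hθ)).1
    have hca : ContinuousAt (fun z : E => c x' z) (ySeg c Λ xm y₀ y₁ θ) := by
      have h4 := (contDiffAt_c hΩ hΛ h0 hx' hyΛ).continuousAt
      exact h4.comp (continuousAt_const.prodMk continuousAt_id)
    exact hca.comp_continuousWithinAt (continuousOn_ySeg hΩ hΛ h0 h1 h2 hxm hseg θ hθ)
  exact ((key x hx).neg).add (key xm hxm)

theorem statement7 (c : E → E → ℝ) (Ω Λ : Set E) (hΩ : IsOpen Ω) (hΛ : IsOpen Λ)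
    (h0 : A0 c Ω Λ) (h1 : A1 c Ω Λ) (h2 : A2 c Ω Λ)
    (xm : E) (hxm : xm ∈ Ω) (y₀ : E) (hy₀ : y₀ ∈ Λ) (y₁ : E) (hy₁ : y₁ ∈ Λ)
    (hseg : segInTarget c Λ xm y₀ y₁)
    (hmono : ∀ θ₁ θ₂ : ℝ, 0 ≤ θ₁ → θ₁ ≤ θ₂ → θ₂ ≤ 1 →
      Splus c Ω Λ xm y₀ y₁ θ₁ ⊆ Splus c Ω Λ xm y₀ y₁ θ₂)
    (hstrict : ∀ θ₁ θ₂ : ℝ, 0 ≤ θ₁ → θ₁ < θ₂ → θ₂ ≤ 1 →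
      Slevel c Ω Λ xm y₀ y₁ θ₁ ∩ Slevel c Ω Λ xm y₀ y₁ θ₂ = {xm}) :
    ∀ θ ∈ Set.Ioo (0:ℝ) 1, ∀ x ∈ Ω,
      slide c Λ xm y₀ y₁ θ x ≤
        max (slide c Λ xm y₀ y₁ 0 x) (slide c Λ xm y₀ y₁ 1 x) ∧
      (x ≠ xm → slide c Λ xm y₀ y₁ θ x <
        max (slide c Λ xm y₀ y₁ 0 x) (slide c Λ xm y₀ y₁ 1 x)) := by
  intro θ hθ x hx
  by_cases hxeq : x = xm
  · subst hxeq
    refine ⟨?_, fun h => absurd rfl h⟩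
    simp [slide]
  · set g : ℝ → ℝ := fun s => slide c Λ xm y₀ y₁ s x with hg
    set D : ℝ → ℝ := deriv g with hD
    have hgc : ContinuousOn g (Set.Icc (0:ℝ) 1) :=
      continuousOn_slide hΩ hΛ h0 h1 h2 hxm hseg hx
    have hM : ∀ s t : ℝ, 0 ≤ s → s ≤ t → t ≤ 1 → 0 ≤ D s → 0 ≤ D t :=
      fun s t hs hst ht hDs => (hmono s t hs hst ht ⟨hx, hDs⟩).2
    have hZ : ∀ s t : ℝ, 0 ≤ s → s < t → t ≤ 1 → D s = 0 → D t = 0 → False := by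
      intro s t hs hst ht h1' h2'
      have hxmem : x ∈ Slevel c Ω Λ xm y₀ y₁ s ∩ Slevel c Ω Λ xm y₀ y₁ t :=
        ⟨⟨hx, h1'⟩, ⟨hx, h2'⟩⟩
      rw [hstrict s t hs hst ht] at hxmem
      exact hxeq hxmem
    have hmono' : ∀ a b : ℝ, 0 ≤ a → a < b → b ≤ 1 →
        (∀ s ∈ Set.Ioo a b, 0 < D s) → g a < g b := by
      intro a b ha hab hb hpos
      have := strictMonoOn_of_deriv_pos (convex_Icc a b)
        (hgc.mono (Set.Icc_subset_Icc ha hb))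
        (fun z hz => hpos z (by rwa [interior_Icc] at hz))
      exact this (Set.left_mem_Icc.2 hab.le) (Set.right_mem_Icc.2 hab.le) hab
    have hanti' : ∀ a b : ℝ, 0 ≤ a → a < b → b ≤ 1 →
        (∀ s ∈ Set.Ioo a b, D s < 0) → g b < g a := by
      intro a b ha hab hb hneg
      have := strictAntiOn_of_deriv_neg (convex_Icc a b)
        (hgc.mono (Set.Icc_subset_Icc ha hb))
        (fun z hz => hneg z (by rwa [interior_Icc] at hz))
      exact this (Set.left_mem_Icc.2 hab.le) (Set.right_mem_Icc.2 hab.le) hab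
    have hlt : g θ < max (g 0) (g 1) := by
      rcases lt_or_ge (D θ) 0 with hneg | hpos
      · refine lt_max_of_lt_left ?_
        refine hanti' 0 θ le_rfl hθ.1 hθ.2.le ?_
        intro s hs
        rcases lt_or_ge (D s) 0 with h | h
        · exact h
        · exact absurd (hM s θ hs.1.le hs.2.le hθ.2.le h) (not_le.2 hneg)
      · have hge : ∀ s : ℝ, θ ≤ s → s ≤ 1 → 0 ≤ D s :=
          fun s hθs hs1 => hM θ s hθ.1.le hθs hs1 hpos
        refine lt_max_of_lt_right ?_
        by_cases hex : ∃ s₀ ∈ Set.Ioo θ 1, D s₀ = 0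
        · obtain ⟨s₀, hs₀, hDs₀⟩ := hex
          have hg1 : g θ < g s₀ := by
            refine hmono' θ s₀ hθ.1.le hs₀.1 hs₀.2.le ?_
            intro s hs
            refine lt_of_le_of_ne (hge s hs.1.le (hs.2.le.trans hs₀.2.le)) ?_
            intro h
            exact hZ s s₀ (hθ.1.trans hs.1).le hs.2 hs₀.2.le h.symm hDs₀
          have hg2 : g s₀ < g 1 := by
            refine hmono' s₀ 1 (hθ.1.trans hs₀.1).le hs₀.2 le_rfl ?_
            intro s hs
            refine lt_of_le_of_ne (hge s (hs₀.1.trans hs.1).le hs.2.le) ?_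
            intro h
            exact hZ s₀ s (hθ.1.trans hs₀.1).le hs.1 hs.2.le hDs₀ h.symm
          exact hg1.trans hg2
        · push_neg at hex
          refine hmono' θ 1 hθ.1.le hθ.2 le_rfl ?_
          intro s hs
          exact lt_of_le_of_ne (hge s hs.1.le hs.2.le) (fun h => hex s hs h.symm)
    exact ⟨hlt.le, fun _ => hlt⟩

end
end

section
/- Suppose c satisfies (A0), (A1), (A2), and fix θ ∈ [0,1] and a c-segment {y_θ} with respect to x_m lying in Λ. Let q_θ = −∇_yc(x_m, y_θ), ẏ_θ = (d/dθ)y_θ, and W_θ = {w ∈ ℝⁿ : ⟨w, ẏ_θ⟩ = 0}; for w ∈ W_θ with q_θ + w ∈ dom(c*-Exp_{y_θ}), let x_w = c*-Exp_{y_θ}(q_θ + w) (so x_w ∈ S_θ). Let p_θ(x) = −∇ₓc(x, y_θ) and ṗ_θ(x) = (d/dθ)(−∇ₓc(x, y_θ)). Then for every direction η ∈ W_θ, the second directional derivative in direction η of the function w ↦ (d²/dθ²)f_θ(x_w) equals the c-sectional curvature: D²_{ηη}[(d²/dθ²)f_θ(x_w)] = 𝔖_c(x_w, y_θ)(∂_η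 x_w, ṗ_θ(x_w)), where ∂_η x_w denotes the directional derivative of w ↦ x_w in direction η. -/
open scoped RealInnerProductSpace
open Filter Topology Set

noncomputable section

variable {n : ℕ}

local notation "E" => EuclideanSpace ℝ (Fin n)

/-! ### Auxiliary machinery -/

section Helpers

variable {G : Type*} [NormedAddCommGroup G] [NormedSpace ℝ G]

lemma deriv2_congr {f g : ℝ → G} {x : ℝ} (h : f =ᶠ[𝓝 x] g) :
    deriv (deriv f) x = deriv (deriv g) x :=
  (h.deriv).deriv_eq

lemma deriv2_neg {f : ℝ → ℝ} {t : ℝ} :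
    deriv (deriv (fun s => -(f s))) t = -(deriv (deriv f) t) := by
  rw [show (fun s => -(f s)) = -f from rfl, deriv.neg']; exact deriv.neg

lemma hasDerivAt_deriv {γ : ℝ → G} {t₀ : ℝ} (hγ : ContDiffAt ℝ 2 γ t₀) :
    HasDerivAt (deriv γ) (deriv (deriv γ) t₀) t₀ := by
  have h1 : ContDiffAt ℝ 1 (fderiv ℝ γ) t₀ := hγ.fderiv_right (by norm_num)
  have h2 : ContDiffAt ℝ 1 (deriv γ) t₀ := by
    have h : deriv γ = fun t => fderiv ℝ γ t 1 := funext fun t => (fderiv_apply_one_eq_deriv).symm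
    rw [h]
    exact h1.clm_apply contDiffAt_const
  exact (h2.differentiableAt (by norm_num)).hasDerivAt

lemma eventually_hasDerivAt {γ : ℝ → G} {t₀ : ℝ} (hγ : ContDiffAt ℝ 2 γ t₀) :
    ∀ᶠ t in 𝓝 t₀, HasDerivAt γ (deriv γ t) t := by
  filter_upwards [hγ.eventually (by norm_num)] with t ht
  exact (ht.differentiableAt (by norm_num)).hasDerivAt

lemma pair_curve_left {γ : ℝ → E} {t₀ : ℝ} (hγ : ContDiffAt ℝ 2 γ t₀) (b : E) :
    deriv (fun t => ((γ t, b) : E × E)) t₀ = (deriv γ t₀, 0) ∧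
    deriv (deriv (fun t => ((γ t, b) : E × E))) t₀ = (deriv (deriv γ) t₀, 0) := by
  have h1 : deriv (fun t => ((γ t, b) : E × E)) =ᶠ[𝓝 t₀]
      fun t => ((deriv γ t, 0) : E × E) := by
    filter_upwards [eventually_hasDerivAt hγ] with t ht
    exact (ht.prodMk (hasDerivAt_const t b)).deriv
  refine ⟨h1.eq_of_nhds, ?_⟩
  rw [h1.deriv_eq]
  exact ((hasDerivAt_deriv hγ).prodMk (hasDerivAt_const t₀ (0:E))).deriv

lemma pair_curve_right {γ : ℝ → E} {t₀ : ℝ} (hγ : ContDiffAt ℝ 2 γ t₀) (b : E) :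
    deriv (fun t => ((b, γ t) : E × E)) t₀ = (0, deriv γ t₀) ∧
    deriv (deriv (fun t => ((b, γ t) : E × E))) t₀ = (0, deriv (deriv γ) t₀) := by
  have h1 : deriv (fun t => ((b, γ t) : E × E)) =ᶠ[𝓝 t₀]
      fun t => (((0 : E), deriv γ t) : E × E) := by
    filter_upwards [eventually_hasDerivAt hγ] with t ht
    exact ((hasDerivAt_const t b).prodMk ht).deriv
  refine ⟨h1.eq_of_nhds, ?_⟩
  rw [h1.deriv_eq]
  exact ((hasDerivAt_const t₀ (0:E)).prodMk (hasDerivAt_deriv hγ)).deriv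

/-- Second derivative of a scalar function along a `C²` curve. -/
lemma deriv2_comp {γ : ℝ → G} {φ : G → ℝ} {t₀ : ℝ}
    (hγ : ContDiffAt ℝ 2 γ t₀) (hφ : ContDiffAt ℝ 2 φ (γ t₀)) :
    deriv (deriv (fun t => φ (γ t))) t₀ =
      fderiv ℝ (fderiv ℝ φ) (γ t₀) (deriv γ t₀) (deriv γ t₀)
        + fderiv ℝ φ (γ t₀) (deriv (deriv γ) t₀) := by
  have hφev : ∀ᶠ t in 𝓝 t₀, DifferentiableAt ℝ φ (γ t) := by
    have h₁ : ∀ᶠ z in 𝓝 (γ t₀), DifferentiableAt ℝ φ z := by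
      filter_upwards [hφ.eventually (by norm_num)] with z hz
      exact hz.differentiableAt (by norm_num)
    exact hγ.continuousAt.eventually h₁
  have key : deriv (fun t => φ (γ t)) =ᶠ[𝓝 t₀]
      fun t => fderiv ℝ φ (γ t) (deriv γ t) := by
    filter_upwards [hφev, eventually_hasDerivAt hγ] with t h₁ h₂
    exact (h₁.hasFDerivAt.comp_hasDerivAt t h₂).deriv
  rw [key.deriv_eq]
  have hA : HasDerivAt (fun t => fderiv ℝ φ (γ t))
      (fderiv ℝ (fderiv ℝ φ) (γ t₀) (deriv γ t₀)) t₀ := by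
    have hdf : HasFDerivAt (fderiv ℝ φ) (fderiv ℝ (fderiv ℝ φ) (γ t₀)) (γ t₀) :=
      ((hφ.fderiv_right (m := 1) (by norm_num)).differentiableAt (by norm_num)).hasFDerivAt
    exact hdf.comp_hasDerivAt t₀ (hγ.differentiableAt (by norm_num)).hasDerivAt
  exact (hA.clm_apply (hasDerivAt_deriv hγ)).deriv

lemma exists_CLE {L : E →L[ℝ] E} (h : Function.Bijective L) :
    ∃ e : E ≃L[ℝ] E, (e : E →L[ℝ] E) = L :=
  ⟨(LinearEquiv.ofBijective (L : E →ₗ[ℝ] E) h).toContinuousLinearEquiv, by ext v; rfl⟩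

/-- Inverse function theorem package for `Function.invFunOn`. -/
lemma inv_package {Φ : E → E} {S : Set E} (hS : IsOpen S) {a : E} (ha : a ∈ S)
    (hΦ : ContDiffAt ℝ 3 Φ a) (hinj : Set.InjOn Φ (closure S))
    {L : E ≃L[ℝ] E} (hL : HasFDerivAt Φ (L : E →L[ℝ] E) a) :
    ContDiffAt ℝ 3 (Function.invFunOn Φ S) (Φ a) ∧
    (∀ᶠ z in 𝓝 (Φ a), Φ (Function.invFunOn Φ S z) = z ∧ Function.invFunOn Φ S z ∈ S) ∧
    HasFDerivAt (Function.invFunOn Φ S) (L.symm : E →L[ℝ] E) (Φ a) ∧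
    Function.invFunOn Φ S (Φ a) = a := by
  have h13 : (3 : WithTop ℕ∞) ≠ 0 := by norm_num
  have hstrict : HasStrictFDerivAt Φ (L : E →L[ℝ] E) a := hΦ.hasStrictFDerivAt' hL h13
  have hg3 : ContDiffAt ℝ 3 (hΦ.localInverse hL h13) (Φ a) := hΦ.to_localInverse hL h13
  have hga : hΦ.localInverse hL h13 (Φ a) = a := hΦ.localInverse_apply_image hL h13
  have hright : ∀ᶠ z in 𝓝 (Φ a), Φ (hΦ.localInverse hL h13 z) = z :=
    hstrict.eventually_right_inverse
  have hcont : ContinuousAt (hΦ.localInverse hL h13) (Φ a) :=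
    hstrict.localInverse_continuousAt
  have hmem : ∀ᶠ z in 𝓝 (Φ a), hΦ.localInverse hL h13 z ∈ S :=
    hcont.eventually_mem (hS.mem_nhds (by rw [hga]; exact ha))
  have heq : Function.invFunOn Φ S =ᶠ[𝓝 (Φ a)] hΦ.localInverse hL h13 := by
    filter_upwards [hright, hmem] with z h₁ h₂
    have hex : ∃ x ∈ S, Φ x = z := ⟨_, h₂, h₁⟩
    exact hinj (subset_closure (Function.invFunOn_mem hex)) (subset_closure h₂)
      (by rw [Function.invFunOn_eq hex, h₁])
  refine ⟨hg3.congr_of_eventuallyEq heq, ?_, ?_, ?_⟩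
  · filter_upwards [hright, hmem, heq] with z h₁ h₂ h₃
    exact ⟨by rw [h₃, h₁], by rw [h₃]; exact h₂⟩
  · exact (hstrict.to_localInverse.hasFDerivAt).congr_of_eventuallyEq heq
  · rw [heq.eq_of_nhds, hga]

end Helpers

section DopMachinery

/-- Directional derivative operator on functions of two variables. -/
def dop (v : E × E) (f : E × E → ℝ) : E × E → ℝ := fun z => fderiv ℝ f z v

lemma dop_contDiffAt {f : E × E → ℝ} {z : E × E} {k kk : WithTop ℕ∞} (v : E × E)
    (hf : ContDiffAt ℝ kk f z) (h : k + 1 ≤ kk) : ContDiffAt ℝ k (dop v f) z :=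
  (hf.fderiv_right h).clm_apply contDiffAt_const

lemma dop_dop_eq {f : E × E → ℝ} {z : E × E} (hf : ContDiffAt ℝ 2 f z) (v w : E × E) :
    dop v (dop w f) z = fderiv ℝ (fderiv ℝ f) z v w := by
  have hdf : DifferentiableAt ℝ (fderiv ℝ f) z :=
    (hf.fderiv_right (m := 1) (by norm_num)).differentiableAt (by norm_num)
  have h1 : dop v (dop w f) z = fderiv ℝ (fun z' => (fderiv ℝ f z') w) z v := rfl
  rw [h1, fderiv_clm_apply hdf (differentiableAt_const w)]
  simp

lemma dop_comm {f : E × E → ℝ} {z : E × E} (hf : ContDiffAt ℝ 2 f z) (v w : E × E) :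
    dop v (dop w f) z = dop w (dop v f) z := by
  rw [dop_dop_eq hf v w, dop_dop_eq hf w v]
  exact (hf.isSymmSndFDerivAt (by simp)) v w

lemma dop_congr_on {f g : E × E → ℝ} {O : Set (E × E)} (hO : IsOpen O)
    (h : ∀ z ∈ O, f z = g z) {z : E × E} (hz : z ∈ O) (v : E × E) :
    dop v f z = dop v g z := by
  have hev : f =ᶠ[𝓝 z] g := Filter.eventuallyEq_of_mem (hO.mem_nhds hz) h
  show fderiv ℝ f z v = fderiv ℝ g z v
  rw [hev.fderiv_eq]

lemma fderiv_prod_left {g : E × E → ℝ} {x y : E} (hg : DifferentiableAt ℝ g (x, y)) (m : E) :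
    fderiv ℝ (fun x' => g (x', y)) x m = fderiv ℝ g (x, y) (m, 0) := by
  have h := (hg.hasFDerivAt.comp x (hasFDerivAt_prodMk_left (𝕜 := ℝ) x y)).fderiv
  rw [show (fun x' => g (x', y)) = (g ∘ fun x' => ((x', y) : E × E)) from rfl, h]
  rfl

lemma fderiv_prod_right {g : E × E → ℝ} {x y : E} (hg : DifferentiableAt ℝ g (x, y)) (m : E) :
    fderiv ℝ (fun y' => g (x, y')) y m = fderiv ℝ g (x, y) (0, m) := by
  have h := (hg.hasFDerivAt.comp y (hasFDerivAt_prodMk_right (𝕜 := ℝ) x y)).fderiv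
  rw [show (fun y' => g (x, y')) = (g ∘ fun y' => ((x, y') : E × E)) from rfl, h]
  rfl

lemma fderiv2_prod_left {g : E × E → ℝ} {O : Set (E × E)} (hO : IsOpen O)
    (hg : ∀ z ∈ O, ContDiffAt ℝ 2 g z) {x y : E} (hz : (x, y) ∈ O) (m m' : E) :
    fderiv ℝ (fderiv ℝ (fun x' => g (x', y))) x m m' = dop (m, 0) (dop (m', 0) g) (x, y) := by
  have hφ : ContDiffAt ℝ 2 (fun x' => g (x', y)) x :=
    (hg _ hz).comp x (contDiffAt_id.prodMk contDiffAt_const)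
  have hdφ : DifferentiableAt ℝ (fderiv ℝ (fun x' => g (x', y))) x :=
    (hφ.fderiv_right (m := 1) (by norm_num)).differentiableAt (by norm_num)
  have step1 : fderiv ℝ (fun x' => fderiv ℝ (fun x'' => g (x'', y)) x' m') x m
      = fderiv ℝ (fderiv ℝ (fun x' => g (x', y))) x m m' := by
    rw [fderiv_clm_apply hdφ (differentiableAt_const m')]
    simp
  rw [← step1]
  have hOx : ∀ᶠ x' in 𝓝 x, ((x', y) : E × E) ∈ O :=
    ((continuous_id.prodMk continuous_const).continuousAt).eventually_mem (hO.mem_nhds hz)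
  have hev : (fun x' => fderiv ℝ (fun x'' => g (x'', y)) x' m')
      =ᶠ[𝓝 x] fun x' => dop (m', 0) g (x', y) := by
    filter_upwards [hOx] with x' hx'
    exact fderiv_prod_left ((hg _ hx').differentiableAt (by norm_num)) m'
  rw [hev.fderiv_eq]
  have hdg' : DifferentiableAt ℝ (dop (m', 0) g) (x, y) :=
    (dop_contDiffAt (k := 1) _ (hg _ hz) (by norm_num)).differentiableAt (by norm_num)
  exact fderiv_prod_left hdg' m

lemma fderiv2_prod_right {g : E × E → ℝ} {O : Set (E × E)} (hO : IsOpen O)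
    (hg : ∀ z ∈ O, ContDiffAt ℝ 2 g z) {x y : E} (hz : (x, y) ∈ O) (m m' : E) :
    fderiv ℝ (fderiv ℝ (fun y' => g (x, y'))) y m m' = dop (0, m) (dop (0, m') g) (x, y) := by
  have hφ : ContDiffAt ℝ 2 (fun y' => g (x, y')) y :=
    (hg _ hz).comp y (contDiffAt_const.prodMk contDiffAt_id)
  have hdφ : DifferentiableAt ℝ (fderiv ℝ (fun y' => g (x, y'))) y :=
    (hφ.fderiv_right (m := 1) (by norm_num)).differentiableAt (by norm_num)
  have step1 : fderiv ℝ (fun y' => fderiv ℝ (fun y'' => g (x, y'')) y' m') y m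
      = fderiv ℝ (fderiv ℝ (fun y' => g (x, y'))) y m m' := by
    rw [fderiv_clm_apply hdφ (differentiableAt_const m')]
    simp
  rw [← step1]
  have hOy : ∀ᶠ y' in 𝓝 y, ((x, y') : E × E) ∈ O :=
    ((continuous_const.prodMk continuous_id).continuousAt).eventually_mem (hO.mem_nhds hz)
  have hev : (fun y' => fderiv ℝ (fun y'' => g (x, y'')) y' m')
      =ᶠ[𝓝 y] fun y' => dop (0, m') g (x, y') := by
    filter_upwards [hOy] with y' hy'
    exact fderiv_prod_right ((hg _ hy').differentiableAt (by norm_num)) m'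
  rw [hev.fderiv_eq]
  have hdg' : DifferentiableAt ℝ (dop (0, m') g) (x, y) :=
    (dop_contDiffAt (k := 1) _ (hg _ hz) (by norm_num)).differentiableAt (by norm_num)
  exact fderiv_prod_right hdg' m

lemma inner_negGradY_eq {c : E → E → ℝ} {x y : E} (m : E)
    (hd : DifferentiableAt ℝ (fun z : E × E => c z.1 z.2) (x, y)) :
    ⟪negGradY c x y, m⟫ = -(dop (0, m) (fun z : E × E => c z.1 z.2) (x, y)) := by
  have h1 : ⟪negGradY c x y, m⟫ = -(fderiv ℝ (fun y' => c x y') y m) := by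
    rw [negGradY, gradient]
    rw [inner_neg_left]
    rw [InnerProductSpace.toDual_symm_apply]
  rw [h1, fderiv_prod_right hd m]
  rfl

lemma inner_negGradX_eq {c : E → E → ℝ} {x y : E} (m : E)
    (hd : DifferentiableAt ℝ (fun z : E × E => c z.1 z.2) (x, y)) :
    ⟪negGradX c x y, m⟫ = -(dop (m, 0) (fun z : E × E => c z.1 z.2) (x, y)) := by
  have h1 : ⟪negGradX c x y, m⟫ = -(fderiv ℝ (fun x' => c x' y) x m) := by
    rw [negGradX, gradient]
    rw [inner_neg_left]
    rw [InnerProductSpace.toDual_symm_apply]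
  rw [h1, fderiv_prod_left hd m]
  rfl

lemma contDiffAt_c4 {c : E → E → ℝ} {Ω Λ : Set E} (hΩ : IsOpen Ω) (hΛ : IsOpen Λ)
    (h0 : A0 c Ω Λ) {x y : E} (hx : x ∈ Ω) (hy : y ∈ Λ) :
    ContDiffAt ℝ 4 (fun z : E × E => c z.1 z.2) (x, y) := by
  have hmem : (closure Ω ×ˢ closure Λ) ∈ 𝓝 ((x, y) : E × E) :=
    Filter.mem_of_superset ((hΩ.prod hΛ).mem_nhds ⟨hx, hy⟩)
      (Set.prod_mono subset_closure subset_closure)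
  exact h0.contDiffAt hmem

lemma contDiffAt_negGradY_pair {c : E → E → ℝ} {Ω Λ : Set E} (hΩ : IsOpen Ω) (hΛ : IsOpen Λ)
    (h0 : A0 c Ω Λ) {x y : E} (hx : x ∈ Ω) (hy : y ∈ Λ) :
    ContDiffAt ℝ 3 (fun z : E × E => negGradY c z.1 z.2) (x, y) := by
  have hrepr : (fun z : E × E => negGradY c z.1 z.2)
      = fun z : E × E =>
        -((InnerProductSpace.toDual ℝ E).symm (fderiv ℝ (fun y' => c z.1 y') z.2)) := rfl
  have hin : ContDiffAt ℝ 4 (fun p : (E × E) × E => ((p.1.1, p.2) : E × E)) ((x, y), y) :=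
    ((contDiff_fst.fst.prodMk contDiff_snd).contDiffAt)
  have hf : ContDiffAt ℝ 4 ((fun z : E × E => c z.1 z.2) ∘
      (fun p : (E × E) × E => ((p.1.1, p.2) : E × E))) ((x, y), y) :=
    ContDiffAt.comp _ (contDiffAt_c4 hΩ hΛ h0 hx hy) hin
  have h3 : ContDiffAt ℝ 3 (fun z : E × E => fderiv ℝ (fun y' => c z.1 y') z.2) (x, y) :=
    ContDiffAt.fderiv hf contDiffAt_snd (by norm_num)
  have hiso : ContDiff ℝ 3 (⇑(InnerProductSpace.toDual ℝ E).symm) :=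
    LinearIsometryEquiv.contDiff _
  have h4 := ContDiff.comp_contDiffAt ((x, y) : E × E) hiso h3
  rw [hrepr]
  exact h4.neg

lemma contDiffAt_negGradX_pair {c : E → E → ℝ} {Ω Λ : Set E} (hΩ : IsOpen Ω) (hΛ : IsOpen Λ)
    (h0 : A0 c Ω Λ) {x y : E} (hx : x ∈ Ω) (hy : y ∈ Λ) :
    ContDiffAt ℝ 3 (fun z : E × E => negGradX c z.1 z.2) (x, y) := by
  have hrepr : (fun z : E × E => negGradX c z.1 z.2)
      = fun z : E × E =>
        -((InnerProductSpace.toDual ℝ E).symm (fderiv ℝ (fun x' => c x' z.2) z.1)) := rfl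
  have hin : ContDiffAt ℝ 4 (fun p : (E × E) × E => ((p.2, p.1.2) : E × E)) ((x, y), x) :=
    ((contDiff_snd.prodMk contDiff_fst.snd).contDiffAt)
  have hf : ContDiffAt ℝ 4 ((fun z : E × E => c z.1 z.2) ∘
      (fun p : (E × E) × E => ((p.2, p.1.2) : E × E))) ((x, y), x) :=
    ContDiffAt.comp _ (contDiffAt_c4 hΩ hΛ h0 hx hy) hin
  have h3 : ContDiffAt ℝ 3 (fun z : E × E => fderiv ℝ (fun x' => c x' z.2) z.1) (x, y) :=
    ContDiffAt.fderiv hf contDiffAt_fst (by norm_num)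
  have hiso : ContDiff ℝ 3 (⇑(InnerProductSpace.toDual ℝ E).symm) :=
    LinearIsometryEquiv.contDiff _
  have h4 := ContDiff.comp_contDiffAt ((x, y) : E × E) hiso h3
  rw [hrepr]
  exact h4.neg

end DopMachinery

section Transpose

lemma contDiffAt_negGradY_left {c : E → E → ℝ} {Ω Λ : Set E} (hΩ : IsOpen Ω) (hΛ : IsOpen Λ)
    (h0 : A0 c Ω Λ) {x y : E} (hx : x ∈ Ω) (hy : y ∈ Λ) :
    ContDiffAt ℝ 3 (fun x' => negGradY c x' y) x := by
  have h := ContDiffAt.comp (g := fun z : E × E => negGradY c z.1 z.2)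
    (f := fun x' => ((x', y) : E × E)) x (contDiffAt_negGradY_pair hΩ hΛ h0 hx hy)
    (contDiffAt_id.prodMk contDiffAt_const)
  exact h

lemma contDiffAt_negGradX_right {c : E → E → ℝ} {Ω Λ : Set E} (hΩ : IsOpen Ω) (hΛ : IsOpen Λ)
    (h0 : A0 c Ω Λ) {x y : E} (hx : x ∈ Ω) (hy : y ∈ Λ) :
    ContDiffAt ℝ 3 (fun y' => negGradX c x y') y := by
  have h := ContDiffAt.comp (g := fun z : E × E => negGradX c z.1 z.2)
    (f := fun y' => ((x, y') : E × E)) y (contDiffAt_negGradX_pair hΩ hΛ h0 hx hy)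
    (contDiffAt_const.prodMk contDiffAt_id)
  exact h

lemma inner_fderiv_negGradY {c : E → E → ℝ} {Ω Λ : Set E} (hΩ : IsOpen Ω) (hΛ : IsOpen Λ)
    (h0 : A0 c Ω Λ) {x y : E} (hx : x ∈ Ω) (hy : y ∈ Λ) (u m : E) :
    ⟪fderiv ℝ (fun x' => negGradY c x' y) x u, m⟫
      = -(dop (u, 0) (dop (0, m) (fun z : E × E => c z.1 z.2)) (x, y)) := by
  have hH : DifferentiableAt ℝ (fun x' => negGradY c x' y) x :=
    (contDiffAt_negGradY_left hΩ hΛ h0 hx hy).differentiableAt (by norm_num)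
  set T : E →L[ℝ] ℝ := (innerSL ℝ : E →L[ℝ] E →L[ℝ] ℝ).flip m with hT
  have h := ((T.hasFDerivAt.comp x hH.hasFDerivAt).fderiv :
    fderiv ℝ (⇑T ∘ fun x' => negGradY c x' y) x
      = T.comp (fderiv ℝ (fun x' => negGradY c x' y) x))
  have hfun : (⇑T ∘ fun x' => negGradY c x' y) = fun x' => ⟪negGradY c x' y, m⟫ := by
    funext x'
    simp only [hT, Function.comp_apply, ContinuousLinearMap.flip_apply, innerSL_apply_apply]
  have step1 : ⟪fderiv ℝ (fun x' => negGradY c x' y) x u, m⟫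
      = fderiv ℝ (fun x' => ⟪negGradY c x' y, m⟫) x u := by
    rw [← hfun, h]
    simp only [hT, ContinuousLinearMap.coe_comp', Function.comp_apply,
      ContinuousLinearMap.flip_apply, innerSL_apply_apply]
  have hOev : ∀ᶠ x' in 𝓝 x, x' ∈ Ω := hΩ.mem_nhds hx
  have hev : (fun x' => ⟪negGradY c x' y, m⟫)
      =ᶠ[𝓝 x] fun x' => -(dop (0, m) (fun z : E × E => c z.1 z.2) (x', y)) := by
    filter_upwards [hOev] with x' hx'
    exact inner_negGradY_eq m
      ((contDiffAt_c4 hΩ hΛ h0 hx' hy).differentiableAt (by norm_num))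
  have hdg : DifferentiableAt ℝ (dop (0, m) (fun z : E × E => c z.1 z.2)) (x, y) :=
    (dop_contDiffAt (k := 1) _ (contDiffAt_c4 hΩ hΛ h0 hx hy)
      (by norm_num)).differentiableAt (by norm_num)
  rw [step1, hev.fderiv_eq, fderiv_fun_neg]
  simp only [ContinuousLinearMap.neg_apply, neg_inj]
  exact fderiv_prod_left hdg u

lemma inner_fderiv_negGradX {c : E → E → ℝ} {Ω Λ : Set E} (hΩ : IsOpen Ω) (hΛ : IsOpen Λ)
    (h0 : A0 c Ω Λ) {x y : E} (hx : x ∈ Ω) (hy : y ∈ Λ) (u m : E) :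
    ⟪fderiv ℝ (fun y' => negGradX c x y') y u, m⟫
      = -(dop (0, u) (dop (m, 0) (fun z : E × E => c z.1 z.2)) (x, y)) := by
  have hG : DifferentiableAt ℝ (fun y' => negGradX c x y') y :=
    (contDiffAt_negGradX_right hΩ hΛ h0 hx hy).differentiableAt (by norm_num)
  set T : E →L[ℝ] ℝ := (innerSL ℝ : E →L[ℝ] E →L[ℝ] ℝ).flip m with hT
  have h := ((T.hasFDerivAt.comp y hG.hasFDerivAt).fderiv :
    fderiv ℝ (⇑T ∘ fun y' => negGradX c x y') y
      = T.comp (fderiv ℝ (fun y' => negGradX c x y') y))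
  have hfun : (⇑T ∘ fun y' => negGradX c x y') = fun y' => ⟪negGradX c x y', m⟫ := by
    funext y'
    simp only [hT, Function.comp_apply, ContinuousLinearMap.flip_apply, innerSL_apply_apply]
  have step1 : ⟪fderiv ℝ (fun y' => negGradX c x y') y u, m⟫
      = fderiv ℝ (fun y' => ⟪negGradX c x y', m⟫) y u := by
    rw [← hfun, h]
    simp only [hT, ContinuousLinearMap.coe_comp', Function.comp_apply,
      ContinuousLinearMap.flip_apply, innerSL_apply_apply]
  have hΛev : ∀ᶠ y' in 𝓝 y, y' ∈ Λ := hΛ.mem_nhds hy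
  have hev : (fun y' => ⟪negGradX c x y', m⟫)
      =ᶠ[𝓝 y] fun y' => -(dop (m, 0) (fun z : E × E => c z.1 z.2) (x, y')) := by
    filter_upwards [hΛev] with y' hy'
    exact inner_negGradX_eq m
      ((contDiffAt_c4 hΩ hΛ h0 hx hy').differentiableAt (by norm_num))
  have hdg : DifferentiableAt ℝ (dop (m, 0) (fun z : E × E => c z.1 z.2)) (x, y) :=
    (dop_contDiffAt (k := 1) _ (contDiffAt_c4 hΩ hΛ h0 hx hy)
      (by norm_num)).differentiableAt (by norm_num)
  rw [step1, hev.fderiv_eq, fderiv_fun_neg]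
  simp only [ContinuousLinearMap.neg_apply, neg_inj]
  exact fderiv_prod_right hdg u

lemma bij_fderiv_negGradY {c : E → E → ℝ} {Ω Λ : Set E} (hΩ : IsOpen Ω) (hΛ : IsOpen Λ)
    (h0 : A0 c Ω Λ) (h2 : A2 c Ω Λ) {x y : E} (hx : x ∈ Ω) (hy : y ∈ Λ) :
    Function.Bijective (fderiv ℝ (fun x' => negGradY c x' y) x) := by
  have hc2 : ContDiffAt ℝ 2 (fun z : E × E => c z.1 z.2) (x, y) :=
    (contDiffAt_c4 hΩ hΛ h0 hx hy).of_le (by norm_num)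
  have hL1 : Function.Bijective (fderiv ℝ (fun y' => negGradX c x y') y) :=
    h2 x (subset_closure hx) y (subset_closure hy)
  have hkey : ∀ u m : E, ⟪fderiv ℝ (fun x' => negGradY c x' y) x u, m⟫
      = ⟪fderiv ℝ (fun y' => negGradX c x y') y m, u⟫ := by
    intro u m
    rw [inner_fderiv_negGradY hΩ hΛ h0 hx hy u m, inner_fderiv_negGradX hΩ hΛ h0 hx hy m u,
      dop_comm hc2 (u, 0) (0, m)]
  have hinj : Function.Injective (fderiv ℝ (fun x' => negGradY c x' y) x) := by
    intro u₁ u₂ hu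
    have hsub : fderiv ℝ (fun x' => negGradY c x' y) x (u₁ - u₂) = 0 := by
      rw [map_sub, hu, sub_self]
    obtain ⟨m, hm⟩ := hL1.2 (u₁ - u₂)
    have h1 : ⟪(fderiv ℝ (fun y' => negGradX c x y') y) m, u₁ - u₂⟫ = 0 := by
      rw [← hkey (u₁ - u₂) m, hsub, inner_zero_left]
    have h2 : ⟪u₁ - u₂, u₁ - u₂⟫ = 0 := by
      nth_rewrite 1 [← hm]
      exact h1
    exact sub_eq_zero.mp (inner_self_eq_zero.mp h2)
  exact ⟨hinj, LinearMap.injective_iff_surjective.mp hinj⟩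

end Transpose

section SplitLemmas

lemma inner_negGradY_fderiv {c : E → E → ℝ} {x y : E} (m : E) :
    ⟪negGradY c x y, m⟫ = -(fderiv ℝ (fun y' => c x y') y m) := by
  rw [negGradY, gradient, inner_neg_left, InnerProductSpace.toDual_symm_apply]

lemma inner_negGradX_fderiv {c : E → E → ℝ} {x y : E} (m : E) :
    ⟪negGradX c x y, m⟫ = -(fderiv ℝ (fun x' => c x' y) x m) := by
  rw [negGradX, gradient, inner_neg_left, InnerProductSpace.toDual_symm_apply]

lemma contDiffAt_partial_right {c : E → E → ℝ} {Ω Λ : Set E} (hΩ : IsOpen Ω) (hΛ : IsOpen Λ)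
    (h0 : A0 c Ω Λ) {x y : E} (hx : x ∈ Ω) (hy : y ∈ Λ) :
    ContDiffAt ℝ 2 (fun y' => c x y') y := by
  have h := ContDiffAt.comp (g := fun z : E × E => c z.1 z.2)
    (f := fun y' => ((x, y') : E × E)) y
    ((contDiffAt_c4 hΩ hΛ h0 hx hy).of_le (show (2 : WithTop ℕ∞) ≤ 4 by norm_num))
    (contDiffAt_const.prodMk contDiffAt_id)
  exact h

lemma snd_deriv1_split {c : E → E → ℝ} {x₁ x₂ y : E}
    (h₁ : DifferentiableAt ℝ (fun y' => c x₁ y') y)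
    (h₂ : DifferentiableAt ℝ (fun y' => c x₂ y') y) (m : E) :
    fderiv ℝ (fun y' => -(c x₁ y') + c x₂ y') y m
      = ⟪negGradY c x₁ y, m⟫ - ⟪negGradY c x₂ y, m⟫ := by
  rw [fderiv_fun_add (h₁.fun_neg) h₂, fderiv_fun_neg, inner_negGradY_fderiv, inner_negGradY_fderiv]
  simp only [ContinuousLinearMap.add_apply, ContinuousLinearMap.neg_apply]
  ring

lemma snd_deriv2_split {c : E → E → ℝ} {Ω Λ : Set E} (hΩ : IsOpen Ω) (hΛ : IsOpen Λ)
    (h0 : A0 c Ω Λ) {x₁ x₂ y : E} (hx₁ : x₁ ∈ Ω) (hx₂ : x₂ ∈ Ω) (hy : y ∈ Λ) (m : E) :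
    fderiv ℝ (fderiv ℝ (fun y' => -(c x₁ y') + c x₂ y')) y m m
      = -(dop (0, m) (dop (0, m) (fun z : E × E => c z.1 z.2)) (x₁, y))
        + dop (0, m) (dop (0, m) (fun z : E × E => c z.1 z.2)) (x₂, y) := by
  have hO : IsOpen (Ω ×ˢ Λ) := hΩ.prod hΛ
  have hg : ∀ z ∈ Ω ×ˢ Λ, ContDiffAt ℝ 2 (fun z : E × E => c z.1 z.2) z := by
    intro z hz
    have h := (contDiffAt_c4 hΩ hΛ h0 hz.1 hz.2).of_le
      (show (2 : WithTop ℕ∞) ≤ 4 by norm_num)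
    simpa using h
  have hΛev : ∀ᶠ y' in 𝓝 y, y' ∈ Λ := hΛ.mem_nhds hy
  have hsplit : fderiv ℝ (fun y' => -(c x₁ y') + c x₂ y') =ᶠ[𝓝 y]
      fun y' => -(fderiv ℝ (fun t => c x₁ t) y') + fderiv ℝ (fun t => c x₂ t) y' := by
    filter_upwards [hΛev] with y' hy'
    rw [fderiv_fun_add (((contDiffAt_partial_right hΩ hΛ h0 hx₁ hy').differentiableAt
        (by norm_num)).fun_neg)
      ((contDiffAt_partial_right hΩ hΛ h0 hx₂ hy').differentiableAt (by norm_num)), fderiv_fun_neg]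
  rw [hsplit.fderiv_eq]
  have hdf₁ : DifferentiableAt ℝ (fderiv ℝ (fun t => c x₁ t)) y :=
    (((contDiffAt_partial_right hΩ hΛ h0 hx₁ hy).fderiv_right (m := 1)
      (by norm_num)).differentiableAt (by norm_num))
  have hdf₂ : DifferentiableAt ℝ (fderiv ℝ (fun t => c x₂ t)) y :=
    (((contDiffAt_partial_right hΩ hΛ h0 hx₂ hy).fderiv_right (m := 1)
      (by norm_num)).differentiableAt (by norm_num))
  rw [fderiv_fun_add (hdf₁.fun_neg) hdf₂, fderiv_fun_neg]
  simp only [ContinuousLinearMap.add_apply, ContinuousLinearMap.neg_apply]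
  have e₁ := fderiv2_prod_right (g := fun z : E × E => c z.1 z.2) hO hg
    (Set.mk_mem_prod hx₁ hy) m m
  have e₂ := fderiv2_prod_right (g := fun z : E × E => c z.1 z.2) hO hg
    (Set.mk_mem_prod hx₂ hy) m m
  rw [e₁, e₂]

lemma deriv2_affine (c₁ c₂ : ℝ) (t : ℝ) :
    deriv (deriv (fun s : ℝ => c₁ + s * c₂)) t = 0 := by
  have h : deriv (fun s : ℝ => c₁ + s * c₂) = fun _ => c₂ :=
    funext fun s => by simpa using (((hasDerivAt_id s).mul_const c₂).const_add c₁).deriv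
  rw [h, deriv_const]

lemma deriv2_add_affine {f : ℝ → ℝ} (hf : ContDiffAt ℝ 2 f 0) (c₁ c₂ : ℝ) :
    deriv (deriv (fun s => f s + (c₁ + s * c₂))) 0 = deriv (deriv f) 0 := by
  have hdiff : ∀ᶠ s in 𝓝 0, DifferentiableAt ℝ f s := by
    filter_upwards [hf.eventually (by norm_num)] with s hs
    exact hs.differentiableAt (by norm_num)
  have h1 : deriv (fun s => f s + (c₁ + s * c₂)) =ᶠ[𝓝 0]
      fun s => deriv f s + c₂ := by
    filter_upwards [hdiff] with s hs
    simpa using (hs.hasDerivAt.fun_add (((hasDerivAt_id s).mul_const c₂).const_add c₁)).deriv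
  rw [h1.deriv_eq, deriv_add_const]

end SplitLemmas

set_option maxHeartbeats 2000000 in
theorem statement11 (c : E → E → ℝ) (Ω Λ : Set E) (hΩ : IsOpen Ω) (hΛ : IsOpen Λ)
    (h0 : A0 c Ω Λ) (h1 : A1 c Ω Λ) (h2 : A2 c Ω Λ)
    (xm : E) (hxm : xm ∈ Ω) (y₀ : E) (hy₀ : y₀ ∈ Λ) (y₁ : E) (hy₁ : y₁ ∈ Λ)
    (hseg : segInTarget c Λ xm y₀ y₁) (θ : ℝ) (hθ : θ ∈ Set.Icc (0:ℝ) 1)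
    (yθ : E) (hyθ : yθ = ySeg c Λ xm y₀ y₁ θ)
    (qθ : E) (hqθ : qθ = negGradY c xm yθ)
    (ydot : E) (hydot : ydot = deriv (fun θ' => ySeg c Λ xm y₀ y₁ θ') θ)
    (xw : E → E) (hxw : ∀ w : E, xw w = cExp (cStar c) Ω yθ (qθ + w))
    (pdot : E → E)
    (hpdot : ∀ x : E, pdot x = deriv (fun θ' => negGradX c x (ySeg c Λ xm y₀ y₁ θ')) θ)
    (F : E → ℝ)
    (hF : ∀ w : E, F w = deriv (deriv (fun θ' => slide c Λ xm y₀ y₁ θ' (xw w))) θ) :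
    ∀ w : E, ⟪w, ydot⟫ = 0 → qθ + w ∈ cExpDom (cStar c) Ω yθ →
      ∀ η : E, ⟪η, ydot⟫ = 0 →
        deriv (deriv (fun s : ℝ => F (w + s • η))) 0
          = cSectional c Λ (xw w) yθ (fderiv ℝ xw w η) (pdot (xw w)) := by
  intro w _hw hwdom η _hη
  classical
  set Ξf : E × E → ℝ := fun z => c z.1 z.2 with hΞf
  have hO : IsOpen (Ω ×ˢ Λ) := hΩ.prod hΛ
  have hΞ4 : ∀ z ∈ Ω ×ˢ Λ, ContDiffAt ℝ 4 Ξf z := fun z hz => by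
    simpa using contDiffAt_c4 hΩ hΛ h0 hz.1 hz.2
  have hΞ2 : ∀ z ∈ Ω ×ˢ Λ, ContDiffAt ℝ 2 Ξf z := fun z hz =>
    (hΞ4 z hz).of_le (show (2 : WithTop ℕ∞) ≤ 4 by norm_num)
  have hdop1 : ∀ (V : E × E), ∀ z ∈ Ω ×ˢ Λ, ContDiffAt ℝ 3 (dop V Ξf) z := fun V z hz =>
    dop_contDiffAt V (hΞ4 z hz) (show (3 : WithTop ℕ∞) + 1 ≤ 4 by norm_num)
  have hdop1' : ∀ (V : E × E), ∀ z ∈ Ω ×ˢ Λ, ContDiffAt ℝ 2 (dop V Ξf) z := fun V z hz =>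
    (hdop1 V z hz).of_le (show (2 : WithTop ℕ∞) ≤ 3 by norm_num)
  have hdop2 : ∀ (V W : E × E), ∀ z ∈ Ω ×ˢ Λ, ContDiffAt ℝ 2 (dop V (dop W Ξf)) z :=
    fun V W z hz => dop_contDiffAt V (hdop1 W z hz) (show (2 : WithTop ℕ∞) + 1 ≤ 3 by norm_num)
  -- basic point facts
  obtain ⟨y', hy'Λ, hy'⟩ := hseg θ hθ
  have hyθΛ : yθ ∈ Λ := by
    rw [hyθ]; exact Function.invFunOn_mem ⟨y', hy'Λ, hy'⟩
  have hGyθ : negGradX c xm yθ = pSeg c xm y₀ y₁ θ := by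
    rw [hyθ]; exact Function.invFunOn_eq ⟨y', hy'Λ, hy'⟩
  obtain ⟨x', hx'Ω, hx'⟩ := hwdom
  have hxwΩ : xw w ∈ Ω := by
    rw [hxw w]; exact Function.invFunOn_mem ⟨x', hx'Ω, hx'⟩
  have hHxw : negGradY c (xw w) yθ = qθ + w := by
    rw [hxw w]; exact Function.invFunOn_eq ⟨x', hx'Ω, hx'⟩
  have hz₀ : ((xw w, yθ) : E × E) ∈ Ω ×ˢ Λ := Set.mk_mem_prod hxwΩ hyθΛ
  -- package P1 : the curve Y1 (the c-segment θ' ↦ y_{θ'})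
  set G₁ : E → E := fun y'' => negGradX c xm y'' with hG₁def
  have hG₁smooth : ContDiffAt ℝ 3 G₁ yθ := contDiffAt_negGradX_right hΩ hΛ h0 hxm hyθΛ
  obtain ⟨e₁, he₁⟩ := exists_CLE (h2 xm (subset_closure hxm) yθ (subset_closure hyθΛ))
  have he₁' : HasFDerivAt G₁ (e₁ : E →L[ℝ] E) yθ := by
    rw [he₁]; exact (hG₁smooth.differentiableAt (by norm_num)).hasFDerivAt
  obtain ⟨hinv₁smooth, hinv₁ev, hinv₁deriv, hinv₁a⟩ :=
    inv_package hΛ hyθΛ hG₁smooth (h1.1 xm hxm) he₁'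
  have hGyθ' : G₁ yθ = pSeg c xm y₀ y₁ θ := hGyθ
  rw [hGyθ'] at hinv₁smooth hinv₁ev hinv₁deriv hinv₁a
  set Y1 : ℝ → E := fun θ' => ySeg c Λ xm y₀ y₁ θ' with hY1def
  have hY1inv : Y1 = fun θ' => Function.invFunOn G₁ Λ (pSeg c xm y₀ y₁ θ') := rfl
  have hpSegsmooth : ContDiffAt ℝ 3 (fun θ' => pSeg c xm y₀ y₁ θ') θ := by
    have h : ContDiff ℝ 3 (fun θ' => pSeg c xm y₀ y₁ θ') := by
      unfold pSeg
      exact ((contDiff_const.sub contDiff_id).smul contDiff_const).add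
        (contDiff_id.smul contDiff_const)
    exact h.contDiffAt
  have hY1smooth : ContDiffAt ℝ 3 Y1 θ := by
    rw [hY1inv]
    exact ContDiffAt.comp θ hinv₁smooth hpSegsmooth
  have hY1θ : Y1 θ = yθ := hinv₁a
  have hY1d : HasDerivAt Y1 ydot θ := by
    rw [hydot]
    exact ((hY1smooth.differentiableAt (by norm_num)).hasDerivAt)
  set yd2 : E := deriv (deriv Y1) θ with hyd2
  -- package P2 : the curve X (s ↦ x_{w + sη})
  set H : E → E := fun x'' => negGradY c x'' yθ with hHdef
  have hHsmooth : ContDiffAt ℝ 3 H (xw w) := contDiffAt_negGradY_left hΩ hΛ h0 hxwΩ hyθΛ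
  obtain ⟨e₂, he₂⟩ := exists_CLE (bij_fderiv_negGradY hΩ hΛ h0 h2 hxwΩ hyθΛ)
  have he₂' : HasFDerivAt H (e₂ : E →L[ℝ] E) (xw w) := by
    rw [he₂]; exact (hHsmooth.differentiableAt (by norm_num)).hasFDerivAt
  obtain ⟨hinv₂smooth, hinv₂ev, hinv₂deriv, hinv₂a⟩ :=
    inv_package hΩ hxwΩ hHsmooth (h1.2 yθ hyθΛ) he₂'
  have hHxw' : H (xw w) = qθ + w := hHxw
  rw [hHxw'] at hinv₂smooth hinv₂ev hinv₂deriv hinv₂a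
  set u : E := (e₂.symm : E →L[ℝ] E) η with hudef
  set X : ℝ → E := fun s => xw (w + s • η) with hXdef
  have hXinv : X = fun s => Function.invFunOn H Ω ((qθ + w) + s • η) := by
    funext s
    rw [hXdef]
    show xw (w + s • η) = _
    rw [hxw (w + s • η)]
    show Function.invFunOn H Ω (qθ + (w + s • η)) = Function.invFunOn H Ω ((qθ + w) + s • η)
    rw [add_assoc]
  have h00 : (qθ + w) + (0:ℝ) • η = qθ + w := by simp
  have hXsmooth : ContDiffAt ℝ 3 X 0 := by
    rw [hXinv]
    have haff : ContDiffAt ℝ 3 (fun s : ℝ => (qθ + w) + s • η) 0 :=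
      ((contDiff_const.add (contDiff_id.smul contDiff_const)) :
        ContDiff ℝ 3 fun s : ℝ => (qθ + w) + s • η).contDiffAt
    have hg : ContDiffAt ℝ 3 (Function.invFunOn H Ω) ((fun s : ℝ => (qθ + w) + s • η) 0) := by
      show ContDiffAt ℝ 3 (Function.invFunOn H Ω) ((qθ + w) + (0:ℝ) • η)
      rw [h00]; exact hinv₂smooth
    exact ContDiffAt.comp 0 hg haff
  have hX2 : ContDiffAt ℝ 2 X 0 := hXsmooth.of_le (show (2 : WithTop ℕ∞) ≤ 3 by norm_num)
  have hXev : ∀ᶠ s in 𝓝 0, H (X s) = (qθ + w) + s • η ∧ X s ∈ Ω := by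
    have hAc : Filter.Tendsto (fun s : ℝ => (qθ + w) + s • η) (𝓝 0) (𝓝 (qθ + w)) := by
      have hc : ContinuousAt (fun s : ℝ => (qθ + w) + s • η) 0 :=
        (continuous_const.add (continuous_id.smul continuous_const)).continuousAt
      have hc' := hc.tendsto
      rw [h00] at hc'
      exact hc'
    filter_upwards [hAc.eventually hinv₂ev] with s hs
    have hXs : X s = Function.invFunOn H Ω ((qθ + w) + s • η) := by rw [hXinv]
    exact ⟨by rw [hXs]; exact hs.1, by rw [hXs]; exact hs.2⟩
  have hX0 : X 0 = xw w := by
    have hXs : X 0 = Function.invFunOn H Ω ((qθ + w) + (0:ℝ) • η) := by rw [hXinv]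
    rw [hXs, h00, hxw w]
    rfl
  have hfderivxw : HasFDerivAt xw (e₂.symm : E →L[ℝ] E) w := by
    have htr : HasFDerivAt (fun w' : E => qθ + w') (ContinuousLinearMap.id ℝ E) w :=
      (hasFDerivAt_id w).const_add qθ
    have hcomp := hinv₂deriv.comp w htr
    have hcg : HasFDerivAt xw ((e₂.symm : E →L[ℝ] E).comp (ContinuousLinearMap.id ℝ E)) w :=
      hcomp.congr_of_eventuallyEq (Filter.Eventually.of_forall fun w' => by
        rw [hxw w']; rfl)
    simpa using hcg
  have hfderivxwη : fderiv ℝ xw w η = u := by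
    rw [hfderivxw.fderiv]
  have hXd : HasDerivAt X u 0 := by
    have hAff : HasDerivAt (fun s : ℝ => (qθ + w) + s • η) η 0 := by
      simpa using (((hasDerivAt_id (0:ℝ)).smul_const η).const_add (qθ + w))
    have hl : HasFDerivAt (Function.invFunOn H Ω) (e₂.symm : E →L[ℝ] E)
        ((fun s : ℝ => (qθ + w) + s • η) 0) := by
      show HasFDerivAt _ _ ((qθ + w) + (0:ℝ) • η)
      rw [h00]; exact hinv₂deriv
    have h := hl.comp_hasDerivAt 0 hAff
    rw [hXinv, hudef]
    exact h
  have hdX : deriv X 0 = u := hXd.deriv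
  set xdd : E := deriv (deriv X) 0 with hxdd
  -- package P3 : the curve Y2 (the cExp-curve at x_w)
  set G₂ : E → E := fun y'' => negGradX c (xw w) y'' with hG₂def
  have hG₂smooth : ContDiffAt ℝ 3 G₂ yθ := contDiffAt_negGradX_right hΩ hΛ h0 hxwΩ hyθΛ
  obtain ⟨e₃, he₃⟩ := exists_CLE (h2 (xw w) (subset_closure hxwΩ) yθ (subset_closure hyθΛ))
  have he₃' : HasFDerivAt G₂ (e₃ : E →L[ℝ] E) yθ := by
    rw [he₃]; exact (hG₂smooth.differentiableAt (by norm_num)).hasFDerivAt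
  obtain ⟨hinv₃smooth, hinv₃ev, hinv₃deriv, hinv₃a⟩ :=
    inv_package hΛ hyθΛ hG₂smooth (h1.1 (xw w) hxwΩ) he₃'
  set ξ : E := pdot (xw w) with hξdef
  have hξ : ξ = (e₃ : E →L[ℝ] E) ydot := by
    rw [hξdef, hpdot (xw w)]
    have hG₂at : HasFDerivAt G₂ (e₃ : E →L[ℝ] E) (Y1 θ) := by
      rw [hY1θ]; exact he₃'
    exact (hG₂at.comp_hasDerivAt θ hY1d).deriv
  set Y2 : ℝ → E := fun t => Function.invFunOn G₂ Λ (negGradX c (xw w) yθ + t • ξ) with hY2def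
  have h00' : negGradX c (xw w) yθ + (0:ℝ) • ξ = negGradX c (xw w) yθ := by simp
  have hY2smooth : ContDiffAt ℝ 3 Y2 0 := by
    have haff : ContDiffAt ℝ 3 (fun t : ℝ => negGradX c (xw w) yθ + t • ξ) 0 :=
      ((contDiff_const.add (contDiff_id.smul contDiff_const)) :
        ContDiff ℝ 3 fun t : ℝ => negGradX c (xw w) yθ + t • ξ).contDiffAt
    have hg : ContDiffAt ℝ 3 (Function.invFunOn G₂ Λ)
        ((fun t : ℝ => negGradX c (xw w) yθ + t • ξ) 0) := by
      show ContDiffAt ℝ 3 _ (negGradX c (xw w) yθ + (0:ℝ) • ξ)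
      rw [h00']; exact hinv₃smooth
    exact ContDiffAt.comp 0 hg haff
  have hY2two : ContDiffAt ℝ 2 Y2 0 := hY2smooth.of_le (show (2 : WithTop ℕ∞) ≤ 3 by norm_num)
  have hY2ev : ∀ᶠ t in 𝓝 0, G₂ (Y2 t) = negGradX c (xw w) yθ + t • ξ ∧ Y2 t ∈ Λ := by
    have hAc : Filter.Tendsto (fun t : ℝ => negGradX c (xw w) yθ + t • ξ) (𝓝 0)
        (𝓝 (negGradX c (xw w) yθ)) := by
      have hc : ContinuousAt (fun t : ℝ => negGradX c (xw w) yθ + t • ξ) 0 :=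
        (continuous_const.add (continuous_id.smul continuous_const)).continuousAt
      have hc' := hc.tendsto
      rw [h00'] at hc'
      exact hc'
    filter_upwards [hAc.eventually hinv₃ev] with t ht
    exact ht
  have hY20 : Y2 0 = yθ := by
    show Function.invFunOn G₂ Λ (negGradX c (xw w) yθ + (0:ℝ) • ξ) = yθ
    rw [h00']
    exact hinv₃a
  have hY2d : HasDerivAt Y2 ydot 0 := by
    have hAff : HasDerivAt (fun t : ℝ => negGradX c (xw w) yθ + t • ξ) ξ 0 := by
      simpa using (((hasDerivAt_id (0:ℝ)).smul_const ξ).const_add (negGradX c (xw w) yθ))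
    have hl : HasFDerivAt (Function.invFunOn G₂ Λ) (e₃.symm : E →L[ℝ] E)
        ((fun t : ℝ => negGradX c (xw w) yθ + t • ξ) 0) := by
      show HasFDerivAt _ _ (negGradX c (xw w) yθ + (0:ℝ) • ξ)
      rw [h00']; exact hinv₃deriv
    have h := hl.comp_hasDerivAt 0 hAff
    have hval : (e₃.symm : E →L[ℝ] E) ξ = ydot := by rw [hξ]; simp
    rw [hval] at h
    exact h
  have hdY2 : deriv Y2 0 = ydot := hY2d.deriv
  set ydd : E := deriv (deriv Y2) 0 with hydd
  -- Claim A : formula for F near w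
  have hFs : ∀ᶠ s in 𝓝 0, F (w + s • η)
      = -(dop (0, ydot) (dop (0, ydot) Ξf) ((X s, yθ) : E × E))
        + ((dop (0, ydot) (dop (0, ydot) Ξf) ((xm, yθ) : E × E) + ⟪w, yd2⟫)
            + s * ⟪η, yd2⟫) := by
    filter_upwards [hXev] with s hs
    obtain ⟨hs1, hsΩ⟩ := hs
    have hs1' : negGradY c (X s) yθ = (qθ + w) + s • η := hs1
    have hred : F (w + s • η)
        = deriv (deriv (fun θ' => -(c (X s) (Y1 θ')) + c xm (Y1 θ'))) θ := by
      rw [hF (w + s • η)]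
      rfl
    have hφ : ContDiffAt ℝ 2 (fun y'' => -(c (X s) y'') + c xm y'') (Y1 θ) := by
      rw [hY1θ]
      exact ((contDiffAt_partial_right hΩ hΛ h0 hsΩ hyθΛ).neg).add
        (contDiffAt_partial_right hΩ hΛ h0 hxm hyθΛ)
    have hcomp : deriv (deriv (fun θ' => -(c (X s) (Y1 θ')) + c xm (Y1 θ'))) θ
        = fderiv ℝ (fderiv ℝ (fun y'' => -(c (X s) y'') + c xm y'')) (Y1 θ)
            (deriv Y1 θ) (deriv Y1 θ)
          + fderiv ℝ (fun y'' => -(c (X s) y'') + c xm y'') (Y1 θ)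
            (deriv (deriv Y1) θ) :=
      deriv2_comp (hY1smooth.of_le (show (2:WithTop ℕ∞) ≤ 3 by norm_num)) hφ
    rw [hY1θ, ← hydot, ← hyd2] at hcomp
    rw [hred, hcomp]
    have hsnd2 : fderiv ℝ (fderiv ℝ (fun y'' => -(c (X s) y'') + c xm y'')) yθ ydot ydot
        = -(dop (0, ydot) (dop (0, ydot) Ξf) ((X s, yθ) : E × E))
          + dop (0, ydot) (dop (0, ydot) Ξf) ((xm, yθ) : E × E) :=
      snd_deriv2_split hΩ hΛ h0 hsΩ hxm hyθΛ ydot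
    have hsnd1 : fderiv ℝ (fun y'' => -(c (X s) y'') + c xm y'') yθ yd2
        = ⟪negGradY c (X s) yθ, yd2⟫ - ⟪negGradY c xm yθ, yd2⟫ :=
      snd_deriv1_split
        ((contDiffAt_partial_right hΩ hΛ h0 hsΩ hyθΛ).differentiableAt (by norm_num))
        ((contDiffAt_partial_right hΩ hΛ h0 hxm hyθΛ).differentiableAt (by norm_num)) yd2
    rw [hsnd2, hsnd1, hs1', ← hqθ]
    rw [inner_add_left, inner_add_left, real_inner_smul_left]
    ring
  -- LHS reduction
  have hpairX : ContDiffAt ℝ 2 (fun s : ℝ => ((X s, yθ) : E × E)) 0 :=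
    hX2.prodMk contDiffAt_const
  have hg2X : ContDiffAt ℝ 2 (dop (0, ydot) (dop (0, ydot) Ξf)) ((X 0, yθ) : E × E) := by
    rw [hX0]; exact hdop2 (0, ydot) (0, ydot) _ hz₀
  have hLHS : deriv (deriv (fun s : ℝ => F (w + s • η))) 0
      = -(dop (u, 0) (dop (u, 0) (dop (0, ydot) (dop (0, ydot) Ξf))) ((xw w, yθ) : E × E)
          + dop (xdd, 0) (dop (0, ydot) (dop (0, ydot) Ξf)) ((xw w, yθ) : E × E)) := by
    rw [deriv2_congr hFs]
    have hf2 : ContDiffAt ℝ 2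
        (fun s : ℝ => -(dop (0, ydot) (dop (0, ydot) Ξf) ((X s, yθ) : E × E))) 0 := by
      have h := ContDiffAt.comp (g := dop (0, ydot) (dop (0, ydot) Ξf))
        (f := fun s : ℝ => ((X s, yθ) : E × E)) 0 hg2X hpairX
      exact h.neg
    rw [deriv2_add_affine hf2 _ _, deriv2_neg]
    have hcomp : deriv (deriv (fun s : ℝ =>
          dop (0, ydot) (dop (0, ydot) Ξf) ((X s, yθ) : E × E))) 0
        = fderiv ℝ (fderiv ℝ (dop (0, ydot) (dop (0, ydot) Ξf))) ((X 0, yθ) : E × E)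
            (deriv (fun s : ℝ => ((X s, yθ) : E × E)) 0)
            (deriv (fun s : ℝ => ((X s, yθ) : E × E)) 0)
          + fderiv ℝ (dop (0, ydot) (dop (0, ydot) Ξf)) ((X 0, yθ) : E × E)
            (deriv (deriv (fun s : ℝ => ((X s, yθ) : E × E))) 0) :=
      deriv2_comp hpairX hg2X
    rw [(pair_curve_left hX2 yθ).1, (pair_curve_left hX2 yθ).2, hdX, ← hxdd, hX0] at hcomp
    rw [hcomp]
    rw [← dop_dop_eq (hdop2 (0, ydot) (0, ydot) _ hz₀) (u, 0) (u, 0)]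
    rfl
  -- RHS reduction
  have hpairY2 : ContDiffAt ℝ 2 (fun t : ℝ => ((xw w, Y2 t) : E × E)) 0 :=
    contDiffAt_const.prodMk hY2two
  have hg2Y : ContDiffAt ℝ 2 (dop (u, 0) (dop (u, 0) Ξf)) ((xw w, Y2 0) : E × E) := by
    rw [hY20]; exact hdop2 (u, 0) (u, 0) _ hz₀
  have hPev : ∀ᶠ t in 𝓝 0,
      -(iteratedFDeriv ℝ 2 (fun x'' => c x'' (Y2 t)) (xw w) ![u, u])
        = -(dop (u, 0) (dop (u, 0) Ξf) ((xw w, Y2 t) : E × E)) := by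
    filter_upwards [hY2ev] with t ht
    have h2a : iteratedFDeriv ℝ 2 (fun x'' => c x'' (Y2 t)) (xw w) ![u, u]
        = fderiv ℝ (fderiv ℝ (fun x'' => c x'' (Y2 t))) (xw w) u u := by
      rw [iteratedFDeriv_two_apply]
      simp
    have h2b : fderiv ℝ (fderiv ℝ (fun x'' => c x'' (Y2 t))) (xw w) u u
        = dop (u, 0) (dop (u, 0) Ξf) ((xw w, Y2 t) : E × E) :=
      fderiv2_prod_left hO hΞ2 (Set.mk_mem_prod hxwΩ ht.2) u u
    rw [h2a, h2b]
  have hRHS : deriv (deriv (fun t : ℝ =>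
        -(iteratedFDeriv ℝ 2 (fun x'' => c x'' (Y2 t)) (xw w) ![u, u]))) 0
      = -(dop (0, ydot) (dop (0, ydot) (dop (u, 0) (dop (u, 0) Ξf))) ((xw w, yθ) : E × E)
          + dop (0, ydd) (dop (u, 0) (dop (u, 0) Ξf)) ((xw w, yθ) : E × E)) := by
    rw [deriv2_congr hPev, deriv2_neg]
    have hcomp : deriv (deriv (fun t : ℝ =>
          dop (u, 0) (dop (u, 0) Ξf) ((xw w, Y2 t) : E × E))) 0
        = fderiv ℝ (fderiv ℝ (dop (u, 0) (dop (u, 0) Ξf))) ((xw w, Y2 0) : E × E)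
            (deriv (fun t : ℝ => ((xw w, Y2 t) : E × E)) 0)
            (deriv (fun t : ℝ => ((xw w, Y2 t) : E × E)) 0)
          + fderiv ℝ (dop (u, 0) (dop (u, 0) Ξf)) ((xw w, Y2 0) : E × E)
            (deriv (deriv (fun t : ℝ => ((xw w, Y2 t) : E × E))) 0) :=
      deriv2_comp hpairY2 hg2Y
    rw [(pair_curve_right hY2two (xw w)).1, (pair_curve_right hY2two (xw w)).2,
      hdY2, ← hydd, hY20] at hcomp
    rw [hcomp]
    rw [← dop_dop_eq (hdop2 (u, 0) (u, 0) _ hz₀) (0, ydot) (0, ydot)]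
    rfl
  -- constraint ★1 from the curve X
  have hstar1 : ∀ m : E,
      dop (u, 0) (dop (u, 0) (dop (0, m) Ξf)) ((xw w, yθ) : E × E)
        + dop (xdd, 0) (dop (0, m) Ξf) ((xw w, yθ) : E × E) = 0 := by
    intro m
    have haff : deriv (deriv (fun s : ℝ => (⟪H (X s), m⟫ : ℝ))) 0 = 0 := by
      have hev : (fun s : ℝ => (⟪H (X s), m⟫ : ℝ)) =ᶠ[𝓝 0]
          fun s => ⟪qθ + w, m⟫ + s * ⟪η, m⟫ := by
        filter_upwards [hXev] with s hs
        rw [show (⟪H (X s), m⟫ : ℝ) = ⟪(qθ + w) + s • η, m⟫ from by rw [hs.1],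
          inner_add_left, real_inner_smul_left]
      rw [deriv2_congr hev]
      exact deriv2_affine _ _ _
    have hev2 : (fun s : ℝ => (⟪H (X s), m⟫ : ℝ)) =ᶠ[𝓝 0]
        fun s => -(dop (0, m) Ξf ((X s, yθ) : E × E)) := by
      filter_upwards [hXev] with s hs
      exact inner_negGradY_eq m
        ((hΞ4 _ (Set.mk_mem_prod hs.2 hyθΛ)).differentiableAt (by norm_num))
    have hφm : ContDiffAt ℝ 2 (dop (0, m) Ξf) ((X 0, yθ) : E × E) := by
      rw [hX0]; exact hdop1' _ _ hz₀
    have hcomp : deriv (deriv (fun s : ℝ => dop (0, m) Ξf ((X s, yθ) : E × E))) 0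
        = fderiv ℝ (fderiv ℝ (dop (0, m) Ξf)) ((X 0, yθ) : E × E)
            (deriv (fun s : ℝ => ((X s, yθ) : E × E)) 0)
            (deriv (fun s : ℝ => ((X s, yθ) : E × E)) 0)
          + fderiv ℝ (dop (0, m) Ξf) ((X 0, yθ) : E × E)
            (deriv (deriv (fun s : ℝ => ((X s, yθ) : E × E))) 0) :=
      deriv2_comp hpairX hφm
    rw [(pair_curve_left hX2 yθ).1, (pair_curve_left hX2 yθ).2, hdX, ← hxdd, hX0] at hcomp
    have hz : deriv (deriv (fun s : ℝ => dop (0, m) Ξf ((X s, yθ) : E × E))) 0 = 0 := by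
      have h1 : deriv (deriv (fun s : ℝ => -(dop (0, m) Ξf ((X s, yθ) : E × E)))) 0 = 0 := by
        rw [← deriv2_congr hev2]; exact haff
      have h2 := deriv2_neg (f := fun s : ℝ => dop (0, m) Ξf ((X s, yθ) : E × E)) (t := 0)
      linarith
    rw [hz] at hcomp
    rw [← dop_dop_eq (hdop1' (0, m) _ hz₀) (u, 0) (u, 0)] at hcomp
    rw [show fderiv ℝ (dop (0, m) Ξf) ((xw w, yθ) : E × E) ((xdd, (0 : E)) : E × E)
        = dop (xdd, 0) (dop (0, m) Ξf) ((xw w, yθ) : E × E) from rfl] at hcomp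
    exact hcomp.symm
  -- constraint ★2 from the curve Y2
  have hstar2 : ∀ m : E,
      dop (0, ydot) (dop (0, ydot) (dop (m, 0) Ξf)) ((xw w, yθ) : E × E)
        + dop (0, ydd) (dop (m, 0) Ξf) ((xw w, yθ) : E × E) = 0 := by
    intro m
    have haff : deriv (deriv (fun t : ℝ => (⟪G₂ (Y2 t), m⟫ : ℝ))) 0 = 0 := by
      have hev : (fun t : ℝ => (⟪G₂ (Y2 t), m⟫ : ℝ)) =ᶠ[𝓝 0]
          fun t => ⟪negGradX c (xw w) yθ, m⟫ + t * ⟪ξ, m⟫ := by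
        filter_upwards [hY2ev] with t ht
        rw [show (⟪G₂ (Y2 t), m⟫ : ℝ) = ⟪negGradX c (xw w) yθ + t • ξ, m⟫ from by rw [ht.1],
          inner_add_left, real_inner_smul_left]
      rw [deriv2_congr hev]
      exact deriv2_affine _ _ _
    have hev2 : (fun t : ℝ => (⟪G₂ (Y2 t), m⟫ : ℝ)) =ᶠ[𝓝 0]
        fun t => -(dop (m, 0) Ξf ((xw w, Y2 t) : E × E)) := by
      filter_upwards [hY2ev] with t ht
      exact inner_negGradX_eq m
        ((hΞ4 _ (Set.mk_mem_prod hxwΩ ht.2)).differentiableAt (by norm_num))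
    have hφm : ContDiffAt ℝ 2 (dop (m, 0) Ξf) ((xw w, Y2 0) : E × E) := by
      rw [hY20]; exact hdop1' _ _ hz₀
    have hcomp : deriv (deriv (fun t : ℝ => dop (m, 0) Ξf ((xw w, Y2 t) : E × E))) 0
        = fderiv ℝ (fderiv ℝ (dop (m, 0) Ξf)) ((xw w, Y2 0) : E × E)
            (deriv (fun t : ℝ => ((xw w, Y2 t) : E × E)) 0)
            (deriv (fun t : ℝ => ((xw w, Y2 t) : E × E)) 0)
          + fderiv ℝ (dop (m, 0) Ξf) ((xw w, Y2 0) : E × E)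
            (deriv (deriv (fun t : ℝ => ((xw w, Y2 t) : E × E))) 0) :=
      deriv2_comp hpairY2 hφm
    rw [(pair_curve_right hY2two (xw w)).1, (pair_curve_right hY2two (xw w)).2,
      hdY2, ← hydd, hY20] at hcomp
    have hz : deriv (deriv (fun t : ℝ => dop (m, 0) Ξf ((xw w, Y2 t) : E × E))) 0 = 0 := by
      have h1 : deriv (deriv (fun t : ℝ => -(dop (m, 0) Ξf ((xw w, Y2 t) : E × E)))) 0 = 0 := by
        rw [← deriv2_congr hev2]; exact haff
      have h2 := deriv2_neg (f := fun t : ℝ => dop (m, 0) Ξf ((xw w, Y2 t) : E × E)) (t := 0)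
      linarith
    rw [hz] at hcomp
    rw [← dop_dop_eq (hdop1' (m, 0) _ hz₀) (0, ydot) (0, ydot)] at hcomp
    rw [show fderiv ℝ (dop (m, 0) Ξf) ((xw w, yθ) : E × E) (((0 : E), ydd) : E × E)
        = dop (0, ydd) (dop (m, 0) Ξf) ((xw w, yθ) : E × E) from rfl] at hcomp
    exact hcomp.symm
  -- the Schwarz swaps
  have s1 : ∀ z ∈ Ω ×ˢ Λ, dop (u, 0) (dop (0, ydot) (dop (0, ydot) Ξf)) z
      = dop (0, ydot) (dop (u, 0) (dop (0, ydot) Ξf)) z :=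
    fun z hz => dop_comm (hdop1' (0, ydot) z hz) (u, 0) (0, ydot)
  have e1 : dop (u, 0) (dop (u, 0) (dop (0, ydot) (dop (0, ydot) Ξf))) ((xw w, yθ) : E × E)
      = dop (u, 0) (dop (0, ydot) (dop (u, 0) (dop (0, ydot) Ξf))) ((xw w, yθ) : E × E) :=
    dop_congr_on hO s1 hz₀ (u, 0)
  have e2 : dop (u, 0) (dop (0, ydot) (dop (u, 0) (dop (0, ydot) Ξf))) ((xw w, yθ) : E × E)
      = dop (0, ydot) (dop (u, 0) (dop (u, 0) (dop (0, ydot) Ξf))) ((xw w, yθ) : E × E) :=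
    dop_comm (hdop2 (u, 0) (0, ydot) _ hz₀) (u, 0) (0, ydot)
  have s2 : ∀ z ∈ Ω ×ˢ Λ, dop (u, 0) (dop (0, ydot) Ξf) z
      = dop (0, ydot) (dop (u, 0) Ξf) z :=
    fun z hz => dop_comm (hΞ2 z hz) (u, 0) (0, ydot)
  have s3 : ∀ z ∈ Ω ×ˢ Λ, dop (u, 0) (dop (u, 0) (dop (0, ydot) Ξf)) z
      = dop (u, 0) (dop (0, ydot) (dop (u, 0) Ξf)) z :=
    fun z hz => dop_congr_on hO s2 hz (u, 0)
  have e3 : dop (0, ydot) (dop (u, 0) (dop (u, 0) (dop (0, ydot) Ξf))) ((xw w, yθ) : E × E)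
      = dop (0, ydot) (dop (u, 0) (dop (0, ydot) (dop (u, 0) Ξf))) ((xw w, yθ) : E × E) :=
    dop_congr_on hO s3 hz₀ (0, ydot)
  have s4 : ∀ z ∈ Ω ×ˢ Λ, dop (u, 0) (dop (0, ydot) (dop (u, 0) Ξf)) z
      = dop (0, ydot) (dop (u, 0) (dop (u, 0) Ξf)) z :=
    fun z hz => dop_comm (hdop1' (u, 0) z hz) (u, 0) (0, ydot)
  have e4 : dop (0, ydot) (dop (u, 0) (dop (0, ydot) (dop (u, 0) Ξf))) ((xw w, yθ) : E × E)
      = dop (0, ydot) (dop (0, ydot) (dop (u, 0) (dop (u, 0) Ξf))) ((xw w, yθ) : E × E) :=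
    dop_congr_on hO s4 hz₀ (0, ydot)
  have T1 : dop (u, 0) (dop (u, 0) (dop (0, ydot) (dop (0, ydot) Ξf))) ((xw w, yθ) : E × E)
      = dop (0, ydot) (dop (0, ydot) (dop (u, 0) (dop (u, 0) Ξf))) ((xw w, yθ) : E × E) := by
    rw [e1, e2, e3, e4]
  have f1 : dop (xdd, 0) (dop (0, ydot) (dop (0, ydot) Ξf)) ((xw w, yθ) : E × E)
      = dop (0, ydot) (dop (xdd, 0) (dop (0, ydot) Ξf)) ((xw w, yθ) : E × E) :=
    dop_comm (hdop1' (0, ydot) _ hz₀) (xdd, 0) (0, ydot)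
  have s5 : ∀ z ∈ Ω ×ˢ Λ, dop (xdd, 0) (dop (0, ydot) Ξf) z
      = dop (0, ydot) (dop (xdd, 0) Ξf) z :=
    fun z hz => dop_comm (hΞ2 z hz) (xdd, 0) (0, ydot)
  have f2 : dop (0, ydot) (dop (xdd, 0) (dop (0, ydot) Ξf)) ((xw w, yθ) : E × E)
      = dop (0, ydot) (dop (0, ydot) (dop (xdd, 0) Ξf)) ((xw w, yθ) : E × E) :=
    dop_congr_on hO s5 hz₀ (0, ydot)
  have f3 : dop (0, ydot) (dop (0, ydot) (dop (xdd, 0) Ξf)) ((xw w, yθ) : E × E)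
      = -(dop (0, ydd) (dop (xdd, 0) Ξf) ((xw w, yθ) : E × E)) := by
    have h := hstar2 xdd
    exact eq_neg_of_add_eq_zero_left h
  have g1 : dop (0, ydd) (dop (u, 0) (dop (u, 0) Ξf)) ((xw w, yθ) : E × E)
      = dop (u, 0) (dop (0, ydd) (dop (u, 0) Ξf)) ((xw w, yθ) : E × E) :=
    dop_comm (hdop1' (u, 0) _ hz₀) (0, ydd) (u, 0)
  have s6 : ∀ z ∈ Ω ×ˢ Λ, dop (0, ydd) (dop (u, 0) Ξf) z
      = dop (u, 0) (dop (0, ydd) Ξf) z :=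
    fun z hz => dop_comm (hΞ2 z hz) (0, ydd) (u, 0)
  have g2 : dop (u, 0) (dop (0, ydd) (dop (u, 0) Ξf)) ((xw w, yθ) : E × E)
      = dop (u, 0) (dop (u, 0) (dop (0, ydd) Ξf)) ((xw w, yθ) : E × E) :=
    dop_congr_on hO s6 hz₀ (u, 0)
  have g3 : dop (u, 0) (dop (u, 0) (dop (0, ydd) Ξf)) ((xw w, yθ) : E × E)
      = -(dop (xdd, 0) (dop (0, ydd) Ξf) ((xw w, yθ) : E × E)) := by
    have h := hstar1 ydd
    exact eq_neg_of_add_eq_zero_left h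
  have g4 : dop (xdd, 0) (dop (0, ydd) Ξf) ((xw w, yθ) : E × E)
      = dop (0, ydd) (dop (xdd, 0) Ξf) ((xw w, yθ) : E × E) :=
    dop_comm (hΞ2 _ hz₀) (xdd, 0) (0, ydd)
  have T2 : dop (xdd, 0) (dop (0, ydot) (dop (0, ydot) Ξf)) ((xw w, yθ) : E × E)
      = dop (0, ydd) (dop (u, 0) (dop (u, 0) Ξf)) ((xw w, yθ) : E × E) := by
    rw [f1, f2, f3, g1, g2, g3, g4]
  -- conclusion
  have hgoal := hLHS
  rw [T1, T2] at hgoal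
  rw [← hRHS] at hgoal
  rw [hgoal]
  rw [hfderivxwη]
  have hfun : (fun t : ℝ =>
        -(iteratedFDeriv ℝ 2 (fun x'' => c x'' (Y2 t)) (xw w) ![u, u]))
      = (fun t : ℝ => -(iteratedFDeriv ℝ 2
          (fun x' => c x' (cExp c Λ (xw w)
            (negGradX c (xw w) yθ + t • ξ))) (xw w) ![u, u])) := by
    funext t
    have hYc : Y2 t = cExp c Λ (xw w) (negGradX c (xw w) yθ + t • ξ) := rfl
    rw [hYc]
  unfold cSectional
  rw [hfun]
end
end
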